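/- arXiv:math/0109122 — 11 statements merged into one kernel-verified Lean document; each statement's English description precedes it below -/
import Mathlib

section
/- Let c(m,n,ℓ) = (-1)^{m+n-ℓ-1} (m+n-ℓ-1)! ℓ! C(m,ℓ) C(n,ℓ). Then for all positive integers m, n, the sum ∑_{ℓ=0}^{min(m,n)} c(m,n,ℓ) = 0. -/
open Finset Nat

open fwdDiff in
private lemma fwdDiff_iter_shift (g : ℕ → ℤ) (a k : ℕ) :
    (fwdDiff 1)^[k] (fun x => g (x + a)) = fun x => (fwdDiff 1)^[k] g (x + a) := by
  induction k with
  | zero => simp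
  | succ k ih =>
    rw [Function.iterate_succ_apply', Function.iterate_succ_apply', ih]
    funext x
    simp only [fwdDiff]
    have : x + 1 + a = x + a + 1 := by omega
    rw [this]

open fwdDiff in
private lemma keyB (m n : ℕ) (hm : 0 < m) (hn : 0 < n) :
    ∑ k ∈ Finset.range (m + 1),
      (-1 : ℤ) ^ (m - k) * (m.choose k) * ((k + (n - 1)).choose (m - 1)) = 0 := by
  have h := fwdDiff_iter_eq_sum_shift (1 : ℕ)
      (fun x => ((x + (n - 1)).choose (m - 1) : ℤ)) m 0
  have h2 : (fwdDiff 1)^[m] (fun x => ((x.choose (m - 1)) : ℤ)) = fun _ => 0 := by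
    obtain ⟨k, rfl⟩ : ∃ k, m = k + 1 := ⟨m - 1, by omega⟩
    simp only [Nat.add_sub_cancel]
    rw [Function.iterate_succ_apply']
    have h3 := fwdDiff_iter_choose 0 k
    simp only [add_zero] at h3
    rw [h3]
    funext x
    simp [fwdDiff]
  have hzero : (fwdDiff 1)^[m] (fun x => ((x + (n - 1)).choose (m - 1) : ℤ)) = fun _ => 0 := by
    rw [fwdDiff_iter_shift (fun x => ((x.choose (m - 1)) : ℤ)) (n - 1) m, h2]
  rw [hzero] at h
  simp only [smul_eq_mul, mul_one, zero_add] at h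
  rw [← mul_one (0 : ℤ)] at h
  calc ∑ k ∈ Finset.range (m + 1),
      (-1 : ℤ) ^ (m - k) * (m.choose k) * ((k + (n - 1)).choose (m - 1))
      = ∑ k ∈ Finset.range (m + 1),
      ((-1 : ℤ) ^ (m - k) * (m.choose k)) * ((k + (n - 1)).choose (m - 1)) := by
        exact Finset.sum_congr rfl fun k _ => by ring
    _ = 0 := by
        rw [← h]; simp

private lemma keyC (m n : ℕ) (hm : 0 < m) (hn : 0 < n) :
    ∑ ℓ ∈ Finset.range (m + 1),
      (-1 : ℤ) ^ ℓ * (m.choose ℓ) * ((m + n - ℓ - 1).choose (m - 1)) = 0 := by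
  have h := keyB m n hm hn
  rw [← Finset.sum_range_reflect] at h
  rw [← h]
  apply Finset.sum_congr rfl
  intro j hj
  rw [Finset.mem_range] at hj
  have hj' : j ≤ m := by omega
  have e2 : m + 1 - 1 - j + (n - 1) = m + n - j - 1 := by omega
  have e1 : m - (m + 1 - 1 - j) = j := by omega
  have e3 : m.choose (m + 1 - 1 - j) = m.choose j := by
    rw [show m + 1 - 1 - j = m - j from by omega, Nat.choose_symm hj']
  rw [e2, e1, e3]

/-- The vanishing identity for the coefficients
`c(m,n,ℓ) = (-1)^(m+n-ℓ-1) (m+n-ℓ-1)! ℓ! C(m,ℓ) C(n,ℓ)`. -/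
theorem sum_c_eq_zero (m n : ℕ) (hm : 0 < m) (hn : 0 < n) :
    ∑ ℓ ∈ Finset.range (min m n + 1),
      ((-1 : ℤ) ^ (m + n - ℓ - 1) * (Nat.factorial (m + n - ℓ - 1)) * (Nat.factorial ℓ) *
        (m.choose ℓ) * (n.choose ℓ)) = 0 := by
  have hpt : ∀ ℓ ∈ Finset.range (min m n + 1),
      ((-1 : ℤ) ^ (m + n - ℓ - 1) * (Nat.factorial (m + n - ℓ - 1)) * (Nat.factorial ℓ) *
        (m.choose ℓ) * (n.choose ℓ))
      = ((-1 : ℤ) ^ (m + n - 1) * (Nat.factorial n) * (Nat.factorial (m - 1))) *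
          ((-1 : ℤ) ^ ℓ * (m.choose ℓ) * ((m + n - ℓ - 1).choose (m - 1))) := by
    intro ℓ hℓ
    rw [Finset.mem_range] at hℓ
    have hℓm : ℓ ≤ m := by omega
    have hℓn : ℓ ≤ n := by omega
    have hs : (-1 : ℤ) ^ (m + n - ℓ - 1) * (-1 : ℤ) ^ ℓ = (-1 : ℤ) ^ (m + n - 1) := by
      rw [← pow_add]; congr 1; omega
    have hsq : (-1 : ℤ) ^ ℓ * (-1 : ℤ) ^ ℓ = 1 := by
      rw [← pow_add, Even.neg_one_pow ⟨ℓ, rfl⟩]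
    have h1 : n.choose ℓ * ℓ ! * (n - ℓ)! = n ! :=
      Nat.choose_mul_factorial_mul_factorial hℓn
    have h2 : (m + n - ℓ - 1).choose (m - 1) * (m - 1)! * (n - ℓ)! = (m + n - ℓ - 1)! := by
      have := Nat.choose_mul_factorial_mul_factorial (show m - 1 ≤ m + n - ℓ - 1 by omega)
      rwa [show m + n - ℓ - 1 - (m - 1) = n - ℓ from by omega] at this
    have hnat : (m + n - ℓ - 1)! * (ℓ ! * n.choose ℓ)
        = n ! * (m - 1)! * ((m + n - ℓ - 1).choose (m - 1)) := by
      apply Nat.eq_of_mul_eq_mul_right (Nat.factorial_pos (n - ℓ))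
      calc (m + n - ℓ - 1)! * (ℓ ! * n.choose ℓ) * (n - ℓ)!
          = (m + n - ℓ - 1)! * (n.choose ℓ * ℓ ! * (n - ℓ)!) := by ring
        _ = (m + n - ℓ - 1)! * n ! := by rw [h1]
        _ = ((m + n - ℓ - 1).choose (m - 1) * (m - 1)! * (n - ℓ)!) * n ! := by rw [h2]
        _ = n ! * (m - 1)! * ((m + n - ℓ - 1).choose (m - 1)) * (n - ℓ)! := by ring
    have hnatZ : ((m + n - ℓ - 1)! : ℤ) * ((ℓ ! : ℤ) * (n.choose ℓ : ℤ))
        = (n ! : ℤ) * ((m - 1)! : ℤ) * ((m + n - ℓ - 1).choose (m - 1) : ℤ) := by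
      exact_mod_cast congrArg (Nat.cast : ℕ → ℤ) hnat
    linear_combination ((-1 : ℤ) ^ (m + n - ℓ - 1) * (m.choose ℓ)) * hnatZ
      + (((m.choose ℓ) : ℤ) * (n !) * ((m - 1)!) * ((m + n - ℓ - 1).choose (m - 1))
          * (-1 : ℤ) ^ ℓ) * hs
      - (((m.choose ℓ) : ℤ) * (n !) * ((m - 1)!) * ((m + n - ℓ - 1).choose (m - 1))
          * (-1 : ℤ) ^ (m + n - ℓ - 1)) * hsq
  rw [Finset.sum_congr rfl hpt, ← Finset.mul_sum]
  have hext : ∑ ℓ ∈ Finset.range (min m n + 1),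
      (-1 : ℤ) ^ ℓ * (m.choose ℓ) * ((m + n - ℓ - 1).choose (m - 1))
      = ∑ ℓ ∈ Finset.range (m + 1),
      (-1 : ℤ) ^ ℓ * (m.choose ℓ) * ((m + n - ℓ - 1).choose (m - 1)) := by
    apply Finset.sum_subset (Finset.range_subset_range.2 (by omega))
    intro x hx hnx
    rw [Finset.mem_range] at hx hnx
    push_neg at hnx
    have : (m + n - x - 1).choose (m - 1) = 0 :=
      Nat.choose_eq_zero_of_lt (by omega)
    simp [this]
  rw [hext, keyC m n hm hn, mul_zero]
end

section
/- For positive integers m, n, the polynomial P_{m,n}(t) = ∑_{ℓ=0}^{min(m,n)} d(m,n,ℓ) (-t)^ℓ, where d(m,n,ℓ) = C(m,ℓ)C(n,ℓ)/C(m+n-1,ℓ), satisfies the differential equation t(1-t) y''(t) - (m+n-1)(1-t) y'(t) - m n y(t) = 0. -/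
open Polynomial

lemma cast_choose_succ' {m ℓ : ℕ} (h : ℓ < m) :
    ((m.choose (ℓ+1)) : ℚ) * (ℓ+1) = (m.choose ℓ : ℚ) * ((m:ℚ) - ℓ) := by
  rw [show ((m:ℚ) - ℓ) = ((m - ℓ : ℕ) : ℚ) from (Nat.cast_sub h.le).symm]
  exact_mod_cast Nat.choose_succ_right_eq m ℓ

lemma key_rec' (m n ℓ : ℕ) (h1 : ℓ + 1 ≤ m) (h2 : ℓ + 1 ≤ n) :
    ((-1:ℚ)^(ℓ+1) * ((m.choose (ℓ+1) * n.choose (ℓ+1) : ℚ) / ((m + n - 1).choose (ℓ+1)))) * (ℓ+1) * (((ℓ:ℚ)+1) - m - n)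
    = ((-1:ℚ)^ℓ * ((m.choose ℓ * n.choose ℓ : ℚ) / ((m + n - 1).choose ℓ))) * (((ℓ:ℚ) - m) * ((ℓ:ℚ) - n)) := by
  have hℓm : ℓ < m := h1
  have hℓn : ℓ < n := h2
  have hmn : ℓ < m + n - 1 := by omega
  have e1 := cast_choose_succ' hℓm
  have e2 := cast_choose_succ' hℓn
  have e3 := cast_choose_succ' hmn
  have d0 : ((m + n - 1).choose ℓ : ℚ) ≠ 0 :=
    Nat.cast_ne_zero.mpr (Nat.choose_pos hmn.le).ne'
  have hcast : ((m + n - 1 : ℕ) : ℚ) = (m:ℚ) + n - 1 := by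
    push_cast [Nat.cast_sub (by omega : 1 ≤ m + n)]; ring
  rw [hcast] at e3
  have hℓ1 : ((ℓ:ℚ)+1) ≠ 0 := by positivity
  have hs : (m:ℚ) + n - 1 - ℓ ≠ 0 := by
    have h' : ((ℓ:ℚ)) < ((m+n-1 : ℕ):ℚ) := by exact_mod_cast hmn
    rw [hcast] at h'
    linarith
  have hx : (m.choose (ℓ+1):ℚ) = (m.choose ℓ:ℚ) * ((m:ℚ)-ℓ) / ((ℓ:ℚ)+1) := by
    field_simp; linarith [e1]
  have hy : (n.choose (ℓ+1):ℚ) = (n.choose ℓ:ℚ) * ((n:ℚ)-ℓ) / ((ℓ:ℚ)+1) := by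
    field_simp; linarith [e2]
  have hz : ((m+n-1).choose (ℓ+1):ℚ) = ((m+n-1).choose ℓ:ℚ) * ((m:ℚ)+n-1-ℓ) / ((ℓ:ℚ)+1) := by
    field_simp; linarith [e3]
  rw [hx, hy, hz]
  field_simp
  ring

lemma L_mono' (u v a : ℚ) (ℓ : ℕ) :
    X * (1 - X) * derivative (derivative (C a * X ^ ℓ))
      - C (u + v - 1) * ((1 - X) * derivative (C a * X ^ ℓ))
      - C (u * v) * (C a * X ^ ℓ)
    = C (a * ℓ * ((ℓ : ℚ) - u - v)) * X ^ (ℓ - 1)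
      - C (a * ((ℓ : ℚ) - u) * ((ℓ : ℚ) - v)) * X ^ ℓ := by
  rcases ℓ with _ | _ | ℓ
  · simp only [pow_zero, Nat.cast_zero, mul_one, derivative_C, derivative_zero]
    simp [C_mul]
    ring
  · simp only [pow_one, derivative_C_mul_X_pow]
    push_cast
    simp [C_mul, C_add, C_sub, C_1]
    ring
  · simp only [derivative_C_mul_X_pow]
    push_cast
    simp only [C_mul, C_add, C_sub, C_1, map_natCast, map_ofNat]
    ring_nf

/-- The hypergeometric polynomial `P_{m,n}(t) = ∑ d(m,n,ℓ) (-t)^ℓ`,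
with `d(m,n,ℓ) = C(m,ℓ)C(n,ℓ)/C(m+n-1,ℓ)`, satisfies
`t(1-t) y'' - (m+n-1)(1-t) y' - mn y = 0`. -/
theorem P_satisfies_ODE (m n : ℕ) (hm : 0 < m) (hn : 0 < n) :
    let P : Polynomial ℚ := ∑ ℓ ∈ Finset.range (min m n + 1),
      Polynomial.C ((m.choose ℓ * n.choose ℓ : ℚ) / ((m + n - 1).choose ℓ : ℚ)) *
        (-Polynomial.X) ^ ℓ
    Polynomial.X * (1 - Polynomial.X) * derivative (derivative P)
      - Polynomial.C ((m : ℚ) + n - 1) * ((1 - Polynomial.X) * derivative P)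
      - Polynomial.C ((m : ℚ) * n) * P = 0 := by
  intro P
  set N := min m n with hN
  set c : ℕ → ℚ := fun ℓ =>
    (-1)^ℓ * ((m.choose ℓ * n.choose ℓ : ℚ) / ((m + n - 1).choose ℓ)) with hc
  have hP : P = ∑ ℓ ∈ Finset.range (N + 1), C (c ℓ) * X ^ ℓ := by
    show (∑ ℓ ∈ Finset.range (N + 1), _) = _
    refine Finset.sum_congr rfl fun ℓ _ => ?_
    rw [hc, neg_pow]
    simp [C_mul]
    ring
  rw [hP, derivative_sum]
  rw [derivative_sum]
  rw [Finset.mul_sum, Finset.mul_sum, Finset.mul_sum, Finset.mul_sum]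
  rw [← Finset.sum_sub_distrib, ← Finset.sum_sub_distrib]
  have step : ∀ ℓ ∈ Finset.range (N + 1),
      X * (1 - X) * derivative (derivative (C (c ℓ) * X ^ ℓ))
        - C ((m:ℚ) + n - 1) * ((1 - X) * derivative (C (c ℓ) * X ^ ℓ))
        - C ((m:ℚ) * n) * (C (c ℓ) * X ^ ℓ)
      = C (c ℓ * ℓ * ((ℓ : ℚ) - m - n)) * X ^ (ℓ - 1)
        - C (c ℓ * ((ℓ : ℚ) - m) * ((ℓ : ℚ) - n)) * X ^ ℓ :=
    fun ℓ _ => L_mono' m n (c ℓ) ℓ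
  rw [Finset.sum_congr rfl step, Finset.sum_sub_distrib]
  rw [Finset.sum_range_succ' (fun ℓ => C (c ℓ * ℓ * ((ℓ : ℚ) - m - n)) * X ^ (ℓ - 1))]
  rw [Finset.sum_range_succ]
  have hF0 : C (c 0 * (0:ℕ) * (((0:ℕ) : ℚ) - m - n)) * X ^ (0 - 1) = 0 := by
    simp
  have hGN : C (c N * ((N : ℚ) - m) * ((N : ℚ) - n)) * X ^ N = 0 := by
    rcases le_total m n with h | h
    · have : N = m := by rw [hN]; exact Nat.min_eq_left h
      rw [this]
      simp
    · have : N = n := by rw [hN]; exact Nat.min_eq_right h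
      rw [this]
      simp
  rw [hF0, hGN, add_zero, add_zero]
  have hFG : ∀ i ∈ Finset.range N,
      C (c (i+1) * (↑(i+1)) * ((↑(i+1) : ℚ) - m - n)) * X ^ (i + 1 - 1)
      = C (c i * ((i : ℚ) - m) * ((i : ℚ) - n)) * X ^ i := by
    intro i hi
    have hi' := Finset.mem_range.mp hi
    have h1 : i + 1 ≤ m := le_trans hi' (min_le_left m n)
    have h2 : i + 1 ≤ n := le_trans hi' (min_le_right m n)
    have hk := key_rec' m n i h1 h2
    have hcoef : c (i+1) * (↑(i+1)) * ((↑(i+1) : ℚ) - m - n)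
        = c i * ((i : ℚ) - m) * ((i : ℚ) - n) := by
      push_cast [hc]
      push_cast [hc] at hk
      linear_combination hk
    rw [hcoef, show i + 1 - 1 = i from rfl]
  rw [Finset.sum_congr rfl hFG]
  ring
end

section
/- For positive integers m, n, P_{m,n}(1) = 0, where P_{m,n}(t) = ∑_{ℓ=0}^{min(m,n)} [C(m,ℓ)C(n,ℓ)/C(m+n-1,ℓ)] (-t)^ℓ. -/
open Finset PowerSeries

lemma one_sub_pow_eq (n : ℕ) :
    ((1 - X : ℤ⟦X⟧)) ^ n = ∑ k ∈ range (n+1), (-1 : ℤ⟦X⟧)^k * (n.choose k : ℤ⟦X⟧) * X^k := by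
  rw [sub_pow, ← Finset.sum_range_reflect]
  apply Finset.sum_congr rfl
  intro k hk
  rw [mem_range] at hk
  have hk' : k ≤ n := by omega
  simp only [Nat.add_sub_cancel]
  have h2 : (-1 : ℤ⟦X⟧) ^ (n - k + n) = (-1)^k := by
    have : n - k + n = k + 2*(n-k) := by omega
    rw [this, pow_add, pow_mul]; simp
  rw [Nat.choose_symm hk', h2, Nat.sub_sub_self hk']
  ring

lemma key (m n : ℕ) (hm : 0 < m) (hn : 0 < n) :
    ∑ k ∈ range (n+1), (-1 : ℤ)^k * (n.choose k : ℤ) * ((m + n - 1 - k).choose (n-1) : ℤ) = 0 := by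
  have h1 : ((1 - X : ℤ⟦X⟧)) ^ n * (mk fun j => ((n - 1 + j).choose (n-1) : ℤ)) = 1 := by
    have := (PowerSeries.invOneSubPow ℤ n).inv_val
    rwa [PowerSeries.invOneSubPow_inv_eq_one_sub_pow,
      PowerSeries.invOneSubPow_val_eq_mk_sub_one_add_choose_of_pos ℤ n hn] at this
  have h2 := congrArg (PowerSeries.coeff (R := ℤ) m) h1
  rw [PowerSeries.coeff_one, if_neg hm.ne', one_sub_pow_eq, Finset.sum_mul, map_sum] at h2
  rw [← h2]
  apply Finset.sum_congr rfl
  intro k hk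
  rw [mem_range] at hk
  rw [show ((-1:ℤ⟦X⟧)^k * (n.choose k : ℤ⟦X⟧) * X^k *
        PowerSeries.mk (fun j => ((n - 1 + j).choose (n-1) : ℤ))) =
      PowerSeries.C (R := ℤ) ((-1)^k * (n.choose k : ℤ)) *
        (X^k * PowerSeries.mk (fun j => ((n - 1 + j).choose (n-1) : ℤ))) by
    simp only [map_mul, map_pow, map_neg, map_one, map_natCast]; ring]
  rw [PowerSeries.coeff_C_mul, PowerSeries.coeff_X_pow_mul']
  by_cases hkm : k ≤ m
  · rw [if_pos hkm, PowerSeries.coeff_mk]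
    have : n - 1 + (m - k) = m + n - 1 - k := by omega
    rw [this]
  · rw [if_neg hkm]
    have : (m + n - 1 - k).choose (n-1) = 0 :=
      Nat.choose_eq_zero_of_lt (by omega)
    rw [this]; ring

lemma key' (m n : ℕ) (hm : 0 < m) (hn : 0 < n) :
    ∑ k ∈ range (min m n + 1),
      (-1 : ℤ)^k * (n.choose k : ℤ) * ((m + n - 1 - k).choose (n-1) : ℤ) = 0 := by
  rw [← key m n hm hn]
  apply Finset.sum_subset (Finset.range_subset_range.mpr (by omega))
  intro x hx hnx
  rw [mem_range] at hx hnx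
  have hx2 : min m n < x := by omega
  have hmx : m < x := by omega
  have : (m + n - 1 - x).choose (n-1) = 0 :=
    Nat.choose_eq_zero_of_lt (by omega)
  rw [this]; ring

lemma term_eq (m n ℓ : ℕ) (hm : 0 < m) (hn : 0 < n) (h1 : ℓ ≤ m) (h2 : ℓ ≤ n) :
    ((m.choose ℓ * n.choose ℓ : ℚ) / ((m + n - 1).choose ℓ : ℚ)) * (-1)^ℓ =
    ((-1 : ℚ)^ℓ * (n.choose ℓ : ℚ) * (((m+n-1-ℓ).choose (n-1) : ℕ) : ℚ)) /
      (((m+n-1).choose m : ℕ) : ℚ) := by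
  have h3 : ℓ ≤ m + n - 1 := by omega
  have h4 : n - 1 ≤ m + n - 1 - ℓ := by omega
  have h5 : m ≤ m + n - 1 := by omega
  rw [Nat.cast_choose ℚ h1, Nat.cast_choose ℚ h2, Nat.cast_choose ℚ h3,
      Nat.cast_choose ℚ h4, Nat.cast_choose ℚ h5]
  have e1 : m + n - 1 - ℓ - (n - 1) = m - ℓ := by omega
  have e2 : m + n - 1 - m = n - 1 := by omega
  rw [e1, e2]
  have nz : ∀ k : ℕ, ((Nat.factorial k : ℕ) : ℚ) ≠ 0 := fun k => Nat.cast_ne_zero.mpr (Nat.factorial_ne_zero k)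
  have a1 := nz ℓ; have a2 := nz (m - ℓ); have a3 := nz (n - ℓ)
  have a4 := nz (m + n - 1 - ℓ); have a5 := nz (n - 1); have a6 := nz m
  have a7 := nz n; have a8 := nz (m + n - 1)
  field_simp

/-- `P_{m,n}(1) = 0`:  `∑_{ℓ=0}^{min(m,n)} (C(m,ℓ)C(n,ℓ)/C(m+n-1,ℓ)) (-1)^ℓ = 0`. -/
theorem P_at_one_eq_zero (m n : ℕ) (hm : 0 < m) (hn : 0 < n) :
    ∑ ℓ ∈ Finset.range (min m n + 1),
      ((m.choose ℓ * n.choose ℓ : ℚ) / ((m + n - 1).choose ℓ : ℚ)) * (-1) ^ ℓ = 0 := by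
  have h5 : m ≤ m + n - 1 := by omega
  have hD : (((m+n-1).choose m : ℕ) : ℚ) ≠ 0 :=
    Nat.cast_ne_zero.mpr (Nat.choose_pos h5).ne'
  have step : ∀ ℓ ∈ Finset.range (min m n + 1),
      ((m.choose ℓ * n.choose ℓ : ℚ) / ((m + n - 1).choose ℓ : ℚ)) * (-1) ^ ℓ =
      ((-1 : ℚ)^ℓ * (n.choose ℓ : ℚ) * (((m+n-1-ℓ).choose (n-1) : ℕ) : ℚ)) /
        (((m+n-1).choose m : ℕ) : ℚ) := by
    intro ℓ hℓ
    rw [mem_range] at hℓ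
    exact term_eq m n ℓ hm hn (by omega) (by omega)
  rw [Finset.sum_congr rfl step, ← Finset.sum_div]
  have : (∑ ℓ ∈ Finset.range (min m n + 1),
      ((-1 : ℚ)^ℓ * (n.choose ℓ : ℚ) * (((m+n-1-ℓ).choose (n-1) : ℕ) : ℚ))) = 0 := by
    have := key' m n hm hn
    have := congrArg (fun z : ℤ => (z : ℚ)) this
    push_cast at this
    convert this using 2
  rw [this, zero_div]
end

section
/- Let A, B be commutative rings and f : A → B a linear (additive, B-module when B is a C-algebra) map. Define Φ_1(f) = f, Φ_2(f)(a₁,a₂) = f(a₁)f(a₂) − f(a₁a₂), and inductively Φ_{n+1}(f)(a₁,…,a_{n+1}) = f(a₁)Φ_n(f)(a₂,…,a_{n+1}) − ∑_{j=2}^{n+1} Φ_n(f)(a₂,…,a₁a_j,…,a_{n+1}). Then Φ_m(f)(a₁,…,a_m) = ∑_{σ ∈ Σ_m} ε(σ) f_σ(a₁,…,a_m), where for a permutation σ with cycle decomposition γ₁⋯γ_q, f_σ = f_{γ₁}⋯f_{γ_q} and f_{(r₁ r₂ … r_k)}(a₁,…,a_m) = f(a_{r₁}a_{r₂}⋯a_{r_k}).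 -/
open Finset

variable {A B : Type*} [CommRing A] [CommRing B]

/-- Inductive Frobenius transformation on lists:
`Φ_{n+1}(f)(a₁,…,a_{n+1}) = f(a₁)Φ_n(f)(a₂,…) − ∑_j Φ_n(f)(a₂,…,a₁a_j,…)`. -/
def PhiL (f : A → B) : List A → B
  | [] => 1
  | a :: l => f a * PhiL f l -
      ∑ j ∈ Finset.range l.length, PhiL f (l.modify j (fun x => a * x))
termination_by l => l.length
decreasing_by all_goals simp [List.length_modify]

/-- The Frobenius term `f_σ(a₁,…,a_n)`: the product over the cycles of `σ`
(including fixed points) of `f` applied to the product of the `aᵢ` along the cycle. -/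
def frobTerm (f : A → B) {n : ℕ} (a : Fin n → A) (σ : Equiv.Perm (Fin n)) : B :=
  ∏ i ∈ Finset.univ.filter (fun i => ∀ j, σ.SameCycle i j → i ≤ j),
    f (∏ j ∈ Finset.univ.filter (fun j => σ.SameCycle i j), a j)

/-- The Frobenius transformation (closed formula):
`Φ_n(f)(a₁,…,a_n) = ∑_{σ∈Σ_n} ε(σ) f_σ(a₁,…,a_n)`. -/
def PhiPerm (f : A → B) {n : ℕ} (a : Fin n → A) : B :=
  ∑ σ : Equiv.Perm (Fin n), (Equiv.Perm.sign σ : ℤ) • frobTerm f a σ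

section AuxLemmas

variable {n : ℕ}

private lemma sig_succ_zero (e : Equiv.Perm (Fin n)) (x : Fin n) :
    Equiv.Perm.decomposeFin.symm ((0 : Fin (n+1)), e) x.succ = (e x).succ := by
  rw [Equiv.Perm.decomposeFin_symm_apply_succ]; simp

-- p = 0 case
private lemma sig0_pow_succ (e : Equiv.Perm (Fin n)) (i : ℕ) (x : Fin n) :
    ((Equiv.Perm.decomposeFin.symm ((0 : Fin (n+1)), e)) ^ i) x.succ = ((e ^ i) x).succ := by
  induction i generalizing x with
  | zero => simp
  | succ i ih =>
      rw [pow_succ', pow_succ', Equiv.Perm.mul_apply, Equiv.Perm.mul_apply, ih, sig_succ_zero]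

private lemma sig0_pow_zero (e : Equiv.Perm (Fin n)) (i : ℕ) :
    ((Equiv.Perm.decomposeFin.symm ((0 : Fin (n+1)), e)) ^ i) 0 = 0 := by
  induction i with
  | zero => simp
  | succ i ih =>
      rw [pow_succ, Equiv.Perm.mul_apply, Equiv.Perm.decomposeFin_symm_apply_zero, ih]

private lemma sameCycle_iff_nat {α : Type*} [Finite α] (f : Equiv.Perm α) (x y : α) :
    f.SameCycle x y ↔ ∃ i : ℕ, (f ^ i) x = y := by
  constructor
  · intro h; obtain ⟨i, _, h⟩ := h.exists_pow_eq'; exact ⟨i, h⟩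
  · rintro ⟨i, h⟩; exact ⟨(i : ℤ), by simpa using h⟩

private lemma sig0_sameCycle_succ (e : Equiv.Perm (Fin n)) (x y : Fin n) :
    (Equiv.Perm.decomposeFin.symm ((0 : Fin (n+1)), e)).SameCycle x.succ y.succ ↔
      e.SameCycle x y := by
  rw [sameCycle_iff_nat, sameCycle_iff_nat]
  constructor
  · rintro ⟨i, h⟩; rw [sig0_pow_succ] at h; exact ⟨i, Fin.succ_inj.mp h⟩
  · rintro ⟨i, h⟩; exact ⟨i, by rw [sig0_pow_succ, h]⟩

private lemma sig0_sameCycle_zero (e : Equiv.Perm (Fin n)) (z : Fin (n+1)) :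
    (Equiv.Perm.decomposeFin.symm ((0 : Fin (n+1)), e)).SameCycle 0 z ↔ z = 0 := by
  constructor
  · intro h
    obtain ⟨i, h⟩ := (sameCycle_iff_nat _ _ _).mp h
    rw [sig0_pow_zero] at h; exact h.symm
  · rintro rfl; exact Equiv.Perm.SameCycle.refl _ _

private lemma sig_succ_succ (j : Fin n) (e : Equiv.Perm (Fin n)) (x : Fin n) :
    Equiv.Perm.decomposeFin.symm (Fin.succ j, e) x.succ =
      if e x = j then 0 else (e x).succ := by
  rw [Equiv.Perm.decomposeFin_symm_apply_succ, Equiv.swap_apply_def]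
  simp [Fin.succ_ne_zero, Fin.succ_inj]

private lemma sigj_fwd (j : Fin n) (e : Equiv.Perm (Fin n)) (i : ℕ) :
    (∀ x y : Fin n,
      ((Equiv.Perm.decomposeFin.symm (Fin.succ j, e)) ^ i) x.succ = y.succ →
        e.SameCycle x y) ∧
    (∀ y : Fin n,
      ((Equiv.Perm.decomposeFin.symm (Fin.succ j, e)) ^ i) 0 = y.succ →
        e.SameCycle j y) := by
  induction i with
  | zero =>
      refine ⟨fun x y h => ?_, fun y h => ?_⟩
      · simp only [pow_zero, Equiv.Perm.coe_one, id_eq] at h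
        exact (Fin.succ_inj.mp h) ▸ Equiv.Perm.SameCycle.refl e x
      · simp only [pow_zero, Equiv.Perm.coe_one, id_eq] at h
        exact absurd h.symm (Fin.succ_ne_zero y)
  | succ i ih =>
      refine ⟨fun x y h => ?_, fun y h => ?_⟩
      · rw [pow_succ, Equiv.Perm.mul_apply, sig_succ_succ] at h
        by_cases hx : e x = j
        · rw [if_pos hx] at h
          have h1 : e.SameCycle x j := hx ▸ ⟨1, by simp⟩
          exact h1.trans (ih.2 y h)
        · rw [if_neg hx] at h
          have h1 : e.SameCycle x (e x) := ⟨1, by simp⟩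
          exact h1.trans (ih.1 (e x) y h)
      · rw [pow_succ, Equiv.Perm.mul_apply, Equiv.Perm.decomposeFin_symm_apply_zero] at h
        exact ih.1 j y h

private lemma sigj_step (j : Fin n) (e : Equiv.Perm (Fin n)) (x : Fin n) :
    (Equiv.Perm.decomposeFin.symm (Fin.succ j, e)).SameCycle x.succ (e x).succ := by
  by_cases hx : e x = j
  · refine (sameCycle_iff_nat _ _ _).mpr ⟨2, ?_⟩
    rw [pow_two, Equiv.Perm.mul_apply, sig_succ_succ, if_pos hx,
      Equiv.Perm.decomposeFin_symm_apply_zero, hx]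
  · exact (sameCycle_iff_nat _ _ _).mpr ⟨1, by rw [pow_one, sig_succ_succ, if_neg hx]⟩

private lemma sigj_of_pow (j : Fin n) (e : Equiv.Perm (Fin n)) (i : ℕ) :
    ∀ x y : Fin n, (e ^ i) x = y →
      (Equiv.Perm.decomposeFin.symm (Fin.succ j, e)).SameCycle x.succ y.succ := by
  induction i with
  | zero =>
      intro x y h; simp only [pow_zero, Equiv.Perm.coe_one, id_eq] at h
      rw [h]
  | succ i ih =>
      intro x y h
      rw [pow_succ, Equiv.Perm.mul_apply] at h
      exact (sigj_step j e x).trans (ih (e x) y h)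

private lemma sigj_sameCycle_succ (j : Fin n) (e : Equiv.Perm (Fin n)) (x y : Fin n) :
    (Equiv.Perm.decomposeFin.symm (Fin.succ j, e)).SameCycle x.succ y.succ ↔
      e.SameCycle x y := by
  constructor
  · intro h
    obtain ⟨i, h⟩ := (sameCycle_iff_nat _ _ _).mp h
    exact (sigj_fwd j e i).1 x y h
  · intro h
    obtain ⟨i, h⟩ := (sameCycle_iff_nat _ _ _).mp h
    exact sigj_of_pow j e i x y h

private lemma sigj_sameCycle_zero_succ (j : Fin n) (e : Equiv.Perm (Fin n)) (y : Fin n) :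
    (Equiv.Perm.decomposeFin.symm (Fin.succ j, e)).SameCycle 0 y.succ ↔
      e.SameCycle j y := by
  constructor
  · intro h
    obtain ⟨i, h⟩ := (sameCycle_iff_nat _ _ _).mp h
    exact (sigj_fwd j e i).2 y h
  · intro h
    have h0 : (Equiv.Perm.decomposeFin.symm (Fin.succ j, e)).SameCycle 0 j.succ :=
      (sameCycle_iff_nat _ _ _).mpr ⟨1, by rw [pow_one, Equiv.Perm.decomposeFin_symm_apply_zero]⟩
    exact h0.trans ((sigj_sameCycle_succ j e j y).mpr h)

private lemma frobTerm_zero (f : A → B) (a : Fin (n+1) → A) (e : Equiv.Perm (Fin n)) :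
    frobTerm f a (Equiv.Perm.decomposeFin.symm ((0 : Fin (n+1)), e)) =
      f (a 0) * frobTerm f (a ∘ Fin.succ) e := by
  set σ := Equiv.Perm.decomposeFin.symm ((0 : Fin (n+1)), e) with hσ
  have hnot : ∀ x : Fin n, ¬ σ.SameCycle x.succ 0 := fun x h =>
    Fin.succ_ne_zero x ((sig0_sameCycle_zero e _).mp h.symm)
  have hcond : ∀ x : Fin n, (∀ i, σ.SameCycle x.succ i → x.succ ≤ i) ↔
      (∀ y, e.SameCycle x y → x ≤ y) := by
    intro x
    constructor
    · intro H y hy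
      exact Fin.succ_le_succ_iff.mp (H y.succ ((sig0_sameCycle_succ e x y).mpr hy))
    · intro H i hi
      cases i using Fin.cases with
      | zero => exact absurd hi (hnot x)
      | succ y => exact Fin.succ_le_succ_iff.mpr (H y ((sig0_sameCycle_succ e x y).mp hi))
  have hcycs : ∀ x : Fin n, Finset.univ.filter (fun i => σ.SameCycle x.succ i) =
      (Finset.univ.filter (fun y => e.SameCycle x y)).map (Fin.succEmb n) := by
    intro x
    ext z
    cases z using Fin.cases with
    | zero =>
        simp only [Finset.mem_filter, Finset.mem_univ, true_and, Finset.mem_map]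
        constructor
        · intro h; exact absurd h (hnot x)
        · rintro ⟨y, _, hy⟩; exact absurd hy (Fin.succ_ne_zero y)
    | succ y =>
        simp only [Finset.mem_filter, Finset.mem_univ, true_and, Finset.mem_map,
          Fin.coe_succEmb]
        rw [sig0_sameCycle_succ]
        constructor
        · intro h; exact ⟨y, h, rfl⟩
        · rintro ⟨y', hy', h⟩; rwa [← Fin.succ_inj.mp h]
  have hcyc0 : Finset.univ.filter (fun i => σ.SameCycle 0 i) = {0} := by
    ext z
    simp only [Finset.mem_filter, Finset.mem_univ, true_and, Finset.mem_singleton]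
    exact sig0_sameCycle_zero e z
  rw [frobTerm, frobTerm, Finset.prod_filter, Finset.prod_filter, Fin.prod_univ_succ]
  congr 1
  · rw [if_pos (fun i _ => Fin.zero_le i), hcyc0, Finset.prod_singleton]
  · refine Finset.prod_congr rfl fun x _ => ?_
    by_cases hC : ∀ y, e.SameCycle x y → x ≤ y
    · rw [if_pos ((hcond x).mpr hC), if_pos hC]
      congr 1
      rw [hcycs x, Finset.prod_map]
      rfl
    · rw [if_neg (fun H => hC ((hcond x).mp H)), if_neg hC]

private lemma frobTerm_succ' (f : A → B) (a : Fin (n+1) → A) (j : Fin n)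
    (e : Equiv.Perm (Fin n)) :
    frobTerm f a (Equiv.Perm.decomposeFin.symm (Fin.succ j, e)) =
      frobTerm f (Function.update (a ∘ Fin.succ) j (a 0 * a j.succ)) e := by
  classical
  set σ := Equiv.Perm.decomposeFin.symm (Fin.succ j, e) with hσ
  set a' : Fin n → A := Function.update (a ∘ Fin.succ) j (a 0 * a j.succ) with ha'
  set S : Finset (Fin n) := Finset.univ.filter (fun y => e.SameCycle j y) with hS
  have hjS : j ∈ S := Finset.mem_filter.mpr ⟨Finset.mem_univ _, Equiv.Perm.SameCycle.refl _ _⟩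
  have hSne : S.Nonempty := ⟨j, hjS⟩
  set m : Fin n := S.min' hSne with hm
  have hmS : m ∈ S := S.min'_mem hSne
  have hjm : e.SameCycle j m := (Finset.mem_filter.mp hmS).2
  have hmem : ∀ y : Fin n, e.SameCycle j y → y ∈ S := fun y hy =>
    Finset.mem_filter.mpr ⟨Finset.mem_univ _, hy⟩
  have hrepm : ∀ y, e.SameCycle m y → m ≤ y := fun y hy =>
    S.min'_le y (hmem y (hjm.trans hy))
  have huniq : ∀ x, (∀ y, e.SameCycle x y → x ≤ y) → e.SameCycle j x → x = m := by
    intro x hx hjx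
    exact le_antisymm (hx m (hjx.symm.trans hjm)) (S.min'_le x (hmem x hjx))
  -- SameCycle facts
  have hzs : ∀ x : Fin n, σ.SameCycle x.succ 0 ↔ e.SameCycle j x := by
    intro x
    rw [Equiv.Perm.sameCycle_comm]
    exact sigj_sameCycle_zero_succ j e x
  -- condition equivalence
  have hcond : ∀ x : Fin n, (∀ i, σ.SameCycle x.succ i → x.succ ≤ i) ↔
      ((∀ y, e.SameCycle x y → x ≤ y) ∧ ¬ e.SameCycle j x) := by
    intro x
    constructor
    · intro H
      refine ⟨fun y hy => Fin.succ_le_succ_iff.mp (H y.succ ((sigj_sameCycle_succ j e x y).mpr hy)),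
        fun hjx => ?_⟩
      have h0 := H 0 ((hzs x).mpr hjx)
      exact absurd (Fin.le_zero_iff.mp h0) (Fin.succ_ne_zero x)
    · rintro ⟨H, hjx⟩ i hi
      cases i using Fin.cases with
      | zero => exact absurd ((hzs x).mp hi) hjx
      | succ y => exact Fin.succ_le_succ_iff.mpr (H y ((sigj_sameCycle_succ j e x y).mp hi))
  -- cycle sets
  have hcycs : ∀ x : Fin n, ¬ e.SameCycle j x →
      Finset.univ.filter (fun i => σ.SameCycle x.succ i) =
        (Finset.univ.filter (fun y => e.SameCycle x y)).map (Fin.succEmb n) := by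
    intro x hjx
    ext z
    cases z using Fin.cases with
    | zero =>
        simp only [Finset.mem_filter, Finset.mem_univ, true_and, Finset.mem_map,
          Fin.coe_succEmb]
        constructor
        · intro h; exact absurd ((hzs x).mp h) hjx
        · rintro ⟨y, _, hy⟩; exact absurd hy (Fin.succ_ne_zero y)
    | succ y =>
        simp only [Finset.mem_filter, Finset.mem_univ, true_and, Finset.mem_map,
          Fin.coe_succEmb]
        rw [sigj_sameCycle_succ]
        constructor
        · intro h; exact ⟨y, h, rfl⟩
        · rintro ⟨y', hy', h⟩; rwa [← Fin.succ_inj.mp h]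
  have hcyc0 : Finset.univ.filter (fun i => σ.SameCycle 0 i) =
      insert (0 : Fin (n+1)) (S.map (Fin.succEmb n)) := by
    ext z
    cases z using Fin.cases with
    | zero => simp [Equiv.Perm.SameCycle.refl]
    | succ y =>
        simp only [Finset.mem_filter, Finset.mem_univ, true_and, Finset.mem_insert,
          Finset.mem_map, Fin.coe_succEmb, hS]
        rw [sigj_sameCycle_zero_succ]
        constructor
        · intro h; exact Or.inr ⟨y, by simpa using h, rfl⟩
        · rintro (h | ⟨y', hy', h⟩)
          · exact absurd h (Fin.succ_ne_zero y)
          · rw [← Fin.succ_inj.mp h]; simpa using hy'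
  -- prod over the 0-cycle
  have h0notmap : (0 : Fin (n+1)) ∉ S.map (Fin.succEmb n) := by
    simp only [Finset.mem_map, Fin.coe_succEmb]
    rintro ⟨y, _, hy⟩; exact absurd hy (Fin.succ_ne_zero y)
  -- m-cycle of e equals S
  have hcycm : Finset.univ.filter (fun y => e.SameCycle m y) = S := by
    ext z
    simp only [Finset.mem_filter, Finset.mem_univ, true_and, hS]
    exact ⟨fun h => hjm.trans h, fun h => hjm.symm.trans h⟩
  -- value at the representative m
  have hprodS : ∏ y ∈ S, a' y = a 0 * ∏ y ∈ S, (a ∘ Fin.succ) y := by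
    rw [ha', Finset.prod_update_of_mem hjS, mul_assoc, Finset.sdiff_singleton_eq_erase]
    congr 1
    exact Finset.mul_prod_erase S (a ∘ Fin.succ) hjS
  -- now expand both sides
  rw [frobTerm, frobTerm, Finset.prod_filter, Finset.prod_filter, Fin.prod_univ_succ,
    ← Finset.mul_prod_erase Finset.univ
      (fun x => if ∀ i, σ.SameCycle x.succ i → x.succ ≤ i then
          f (∏ i ∈ Finset.univ.filter (fun i => σ.SameCycle x.succ i), a i) else 1)
      (Finset.mem_univ m),
    ← Finset.mul_prod_erase Finset.univ
      (fun x => if ∀ y, e.SameCycle x y → x ≤ y then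
          f (∏ y ∈ Finset.univ.filter (fun y => e.SameCycle x y), a' y) else 1)
      (Finset.mem_univ m)]
  have hHm : (if ∀ i, σ.SameCycle m.succ i → m.succ ≤ i then
      f (∏ i ∈ Finset.univ.filter (fun i => σ.SameCycle m.succ i), a i) else 1) = 1 := by
    rw [if_neg]
    intro H
    exact ((hcond m).mp H).2 hjm
  rw [hHm, one_mul]
  congr 1
  · rw [if_pos (fun i _ => Fin.zero_le i), if_pos hrepm, hcyc0, hcycm,
      Finset.prod_insert h0notmap, Finset.prod_map, hprodS]
    rfl
  · refine Finset.prod_congr rfl fun x hx => ?_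
    have hxm : x ≠ m := (Finset.mem_erase.mp hx).1
    by_cases hRx : ∀ y, e.SameCycle x y → x ≤ y
    · have hjx : ¬ e.SameCycle j x := fun h => hxm (huniq x hRx h)
      rw [if_pos ((hcond x).mpr ⟨hRx, hjx⟩), if_pos hRx]
      congr 1
      rw [hcycs x hjx, Finset.prod_map]
      refine Finset.prod_congr rfl fun y hy => ?_
      have hyj : y ≠ j := by
        intro h
        subst h
        exact hjx ((Finset.mem_filter.mp hy).2.symm)
      rw [ha', Function.update_of_ne hyj]
      rfl
    · rw [if_neg (fun H => hRx ((hcond x).mp H).1), if_neg hRx]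

private lemma ofFn_modify {n : ℕ} (c : A) (g : Fin n → A) (j : Fin n) :
    (List.ofFn g).modify j.val (fun x => c * x) =
      List.ofFn (Function.update g j (c * g j)) := by
  apply List.ext_getElem?
  intro i
  rw [List.getElem?_modify, List.getElem?_ofFn, List.getElem?_ofFn]
  by_cases hi : i < n
  · rw [dif_pos hi, dif_pos hi]
    by_cases h : (j : ℕ) = i
    · have hji : j = ⟨i, hi⟩ := Fin.ext h
      subst hji
      simp [Function.update_self]
    · have : (⟨i, hi⟩ : Fin n) ≠ j := fun hh => h (by rw [← hh])
      simp [h, Function.update_of_ne this]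
  · rw [dif_neg hi, dif_neg hi]
    rfl

private lemma phiL_succ (f : A → B) {n : ℕ} (a : Fin (n+1) → A) :
    PhiL f (List.ofFn a) = f (a 0) * PhiL f (List.ofFn (a ∘ Fin.succ)) -
      ∑ j : Fin n, PhiL f (List.ofFn (Function.update (a ∘ Fin.succ) j (a 0 * a j.succ))) := by
  rw [List.ofFn_succ, PhiL]
  congr 1
  rw [List.length_ofFn, ← Fin.sum_univ_eq_sum_range
    (fun j => PhiL f ((List.ofFn fun i => a i.succ).modify j (fun x => a 0 * x)))]
  refine Finset.sum_congr rfl fun j _ => ?_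
  rw [ofFn_modify]
  rfl

private lemma phiPerm_succ (f : A → B) (a : Fin (n+1) → A) :
    PhiPerm f a = f (a 0) * PhiPerm f (a ∘ Fin.succ) -
      ∑ j : Fin n, PhiPerm f (Function.update (a ∘ Fin.succ) j (a 0 * a j.succ)) := by
  rw [PhiPerm, ← Equiv.sum_comp Equiv.Perm.decomposeFin.symm
      (fun σ => ((Equiv.Perm.sign σ : ℤˣ) : ℤ) • frobTerm f a σ),
    Fintype.sum_prod_type, Fin.sum_univ_succ]
  have h1 : ∑ e : Equiv.Perm (Fin n),
      ((Equiv.Perm.sign (Equiv.Perm.decomposeFin.symm ((0 : Fin (n+1)), e)) : ℤˣ) : ℤ) •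
        frobTerm f a (Equiv.Perm.decomposeFin.symm ((0 : Fin (n+1)), e)) =
      f (a 0) * PhiPerm f (a ∘ Fin.succ) := by
    rw [PhiPerm, Finset.mul_sum]
    refine Finset.sum_congr rfl fun e _ => ?_
    rw [frobTerm_zero, Equiv.Perm.decomposeFin.symm_sign, if_pos rfl, one_mul, mul_smul_comm]
  have h2 : ∀ j : Fin n, ∑ e : Equiv.Perm (Fin n),
      ((Equiv.Perm.sign (Equiv.Perm.decomposeFin.symm (Fin.succ j, e)) : ℤˣ) : ℤ) •
        frobTerm f a (Equiv.Perm.decomposeFin.symm (Fin.succ j, e)) =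
      - PhiPerm f (Function.update (a ∘ Fin.succ) j (a 0 * a j.succ)) := by
    intro j
    rw [PhiPerm, ← Finset.sum_neg_distrib]
    refine Finset.sum_congr rfl fun e _ => ?_
    rw [frobTerm_succ', Equiv.Perm.decomposeFin.symm_sign, if_neg (Fin.succ_ne_zero j)]
    push_cast
    rw [neg_mul, one_mul, neg_smul]
  rw [h1]
  rw [Finset.sum_congr rfl (fun j _ => h2 j), Finset.sum_neg_distrib, ← sub_eq_add_neg]

end AuxLemmas

/-- Equivalence of the inductive definition (Definition 2.3) and the closed
Frobenius formula (Definition 2.1): for a linear map `f : A → B` between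
commutative algebras over a field of characteristic zero,
`Φ_m(f)(a₁,…,a_m) = ∑_{σ∈Σ_m} ε(σ) f_σ(a₁,…,a_m)`. -/
theorem phiL_eq_phiPerm {k : Type*} [Field k] [CharZero k]
    [Algebra k A] [Algebra k B] (f : A →ₗ[k] B) {m : ℕ} (a : Fin m → A) :
    PhiL f (List.ofFn a) = PhiPerm (f : A → B) a := by
  induction m with
  | zero =>
      haveI : Subsingleton (Equiv.Perm (Fin 0)) := ⟨fun a b => Equiv.ext fun x => x.elim0⟩
      rw [List.ofFn_zero, PhiL, PhiPerm, Fintype.sum_subsingleton _ (1 : Equiv.Perm (Fin 0))]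
      simp [frobTerm]
  | succ n ih =>
      rw [phiL_succ, phiPerm_succ, ih (a ∘ Fin.succ)]
      congr 1
      exact Finset.sum_congr rfl fun j _ => ih _
end

section
/- Let A, B be commutative algebras with B an integral domain, and let f : A → B be a linear map. If Φ_{n+1}(f) ≡ 0 but Φ_n(f) ≢ 0, then f(1) = n (as an element of B, i.e., n·1_B). -/
open Finset

variable {A B : Type*} [CommRing A] [CommRing B]

/-- If `B` is an integral domain, `Φ_{n+1}(f) ≡ 0` but `Φ_n(f) ≢ 0`,
then `f(1) = n` in `B`. -/
theorem f_one_eq_n {k : Type*} [Field k] [IsDomain B]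
    [Algebra k A] [Algebra k B] (f : A →ₗ[k] B) (n : ℕ)
    (h1 : ∀ l : List A, l.length = n + 1 → PhiL (f : A → B) l = 0)
    (h2 : ∃ l : List A, l.length = n ∧ PhiL (f : A → B) l ≠ 0) :
    f 1 = (n : B) := by
  obtain ⟨l, hl, hne⟩ := h2
  have key := h1 (1 :: l) (by simp [hl])
  rw [PhiL] at key
  have hmod : (fun x : A => 1 * x) = id := by funext x; simp
  simp only [hmod, List.modify_id, Finset.sum_const, Finset.card_range, hl,
    nsmul_eq_mul, sub_eq_zero] at key
  have : (f 1 - (n : B)) * PhiL (f : A → B) l = 0 := by ring_nf; rw [sub_eq_zero]; linear_combination key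
  rcases mul_eq_zero.mp this with h | h
  · exact sub_eq_zero.mp h
  · exact absurd h hne
end

section
/- Let A, B be commutative algebras with B an integral domain of characteristic zero, and let f : A → B be a linear map with Φ_{n+1}(f) ≡ 0. Then f(1) ∈ {0, 1, 2, …, n} (i.e., f(1) = k·1_B for some integer 0 ≤ k ≤ n). -/
open Finset

variable {A B : Type*} [CommRing A] [CommRing B]

theorem modify_id' {α : Type*} (j : ℕ) (l : List α) : List.modify l j (fun x => x) = l := by
  induction l generalizing j with
  | nil => simp
  | cons a l ih => cases j <;> simp [List.modify_succ_cons, ih]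

theorem rep_modify (m j : ℕ) : (List.replicate m (1:A)).modify j (fun x => (1:A) * x) = List.replicate m 1 := by
  simpa using modify_id' j (List.replicate m 1)

theorem phi_rep (f : A → B) (m : ℕ) :
    PhiL f (List.replicate m 1) = ∏ i ∈ Finset.range m, (f 1 - (i : B)) := by
  induction m with
  | zero => simp [PhiL]
  | succ m ih =>
      rw [List.replicate_succ, PhiL]
      simp only [List.length_replicate, rep_modify, ih, Finset.sum_const, Finset.card_range,
        nsmul_eq_mul, Finset.prod_range_succ]
      ring

/-- If `B` is an integral domain of characteristic zero and `Φ_{n+1}(f) ≡ 0`,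
then `f(1) ∈ {0, 1, …, n}`. -/
theorem f_one_mem_range {k : Type*} [Field k] [IsDomain B] [CharZero B]
    [Algebra k A] [Algebra k B] (f : A →ₗ[k] B) (n : ℕ)
    (h : ∀ l : List A, l.length = n + 1 → PhiL (f : A → B) l = 0) :
    ∃ j : ℕ, j ≤ n ∧ f 1 = (j : B) := by
  have h0 := h (List.replicate (n + 1) 1) (by simp)
  rw [phi_rep] at h0
  obtain ⟨i, hi, hz⟩ := Finset.prod_eq_zero_iff.mp h0
  exact ⟨i, Nat.lt_succ_iff.mp (Finset.mem_range.mp hi), by linear_combination hz⟩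
end

section
/- Let A, B be commutative algebras over a field of characteristic zero and f : A → B a Frobenius n-homomorphism. Then the map Φ_n(f)/n! : S^n A → B, restricted to the subalgebra of symmetric tensors in A^{⊗n}, is a ring homomorphism. -/
open Finset

variable {A B : Type*} [CommRing A] [CommRing B]

/-- `f` is a Frobenius `n`-homomorphism: `Φ_{n+1}(f) ≡ 0` and `f(1) = n`. -/
def IsFrobeniusHom (f : A → B) (n : ℕ) : Prop :=
  (∀ a : Fin (n + 1) → A, PhiPerm f a = 0) ∧ f 1 = (n : B)

namespace FrobAux

open Equiv Equiv.Perm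

variable {n : ℕ}

/-- single step same cycle -/
lemma sc_step (σ : Perm (Fin (n+1))) (x : Fin (n+1)) : σ.SameCycle x (σ x) :=
  (Equiv.Perm.sameCycle_apply_right).mpr (Equiv.Perm.SameCycle.refl σ x)

lemma sameCycle_succ (p : Fin (n+1)) (e : Perm (Fin n)) (x : Fin n) :
    (Equiv.Perm.decomposeFin.symm (p, e)).SameCycle x.succ (e x).succ := by
  set σ := Equiv.Perm.decomposeFin.symm (p, e) with hσ
  have h1 : σ x.succ = Equiv.swap 0 p ((e x).succ) := Equiv.Perm.decomposeFin_symm_apply_succ e p x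
  by_cases h : (e x).succ = p
  · have h2 : σ x.succ = 0 := by rw [h1, h, Equiv.swap_apply_right]
    have h3 : σ 0 = (e x).succ := by
      rw [hσ, Equiv.Perm.decomposeFin_symm_apply_zero, h]
    have := sc_step σ x.succ
    rw [h2] at this
    exact this.trans (by rw [← h3]; exact sc_step σ 0)
  · have h2 : σ x.succ = (e x).succ := by
      rw [h1, Equiv.swap_apply_of_ne_of_ne (Fin.succ_ne_zero _) h]
    have := sc_step σ x.succ
    rwa [h2] at this

/-- forward orbit tracking -/
lemma forward_aux (p : Fin (n+1)) (e : Perm (Fin n)) :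
    ∀ m : ℕ, ∀ (x : Fin (n+1)) (j : Fin n),
      ((Equiv.Perm.decomposeFin.symm (p, e) : Perm (Fin (n+1))) ^ m) x = j.succ →
      (∀ i, x = i.succ → e.SameCycle i j) ∧ (∀ q, p = q.succ → x = 0 → e.SameCycle q j) := by
  intro m
  induction m with
  | zero =>
    intro x j h
    simp only [pow_zero, Equiv.Perm.coe_one, id_eq] at h
    subst h
    exact ⟨fun i hi => by rw [Fin.succ_inj.mp hi.symm], fun q hq h0 => absurd h0 (Fin.succ_ne_zero j)⟩
  | succ m ih =>
    intro x j h
    have hh : ((Equiv.Perm.decomposeFin.symm (p, e) : Perm (Fin (n+1))) ^ m)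
        ((Equiv.Perm.decomposeFin.symm (p, e)) x) = j.succ := by
      rw [← Equiv.Perm.mul_apply, ← pow_succ]
      exact h
    constructor
    · intro i hi
      subst hi
      have h1 : (Equiv.Perm.decomposeFin.symm (p, e)) i.succ = Equiv.swap 0 p ((e i).succ) :=
        Equiv.Perm.decomposeFin_symm_apply_succ e p i
      by_cases hc : (e i).succ = p
      · -- goes to 0
        have h0 : (Equiv.Perm.decomposeFin.symm (p, e)) i.succ = 0 := by
          rw [h1, hc, Equiv.swap_apply_right]
        rw [h0] at hh
        have := (ih 0 j hh).2 (e i) hc.symm rfl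
        exact (Equiv.Perm.sameCycle_apply_right.mpr (Equiv.Perm.SameCycle.refl e i)).trans this
      · have h0 : (Equiv.Perm.decomposeFin.symm (p, e)) i.succ = (e i).succ := by
          rw [h1, Equiv.swap_apply_of_ne_of_ne (Fin.succ_ne_zero _) hc]
        rw [h0] at hh
        have := (ih _ j hh).1 (e i) rfl
        exact (Equiv.Perm.sameCycle_apply_right.mpr (Equiv.Perm.SameCycle.refl e i)).trans this
    · intro q hq h0
      subst h0
      subst hq
      have h1 : (Equiv.Perm.decomposeFin.symm (q.succ, e)) 0 = q.succ :=
        Equiv.Perm.decomposeFin_symm_apply_zero q.succ e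
      rw [h1] at hh
      exact (ih q.succ j hh).1 q rfl

lemma sameCycle_succ_iff (p : Fin (n+1)) (e : Perm (Fin n)) (x y : Fin n) :
    (Equiv.Perm.decomposeFin.symm (p, e)).SameCycle x.succ y.succ ↔ e.SameCycle x y := by
  constructor
  · intro h
    obtain ⟨m, -, hm⟩ := h.exists_pow_eq'
    exact (forward_aux p e m x.succ y hm).1 x rfl
  · intro h
    obtain ⟨m, -, hm⟩ := h.exists_pow_eq'
    clear h
    induction m generalizing y with
    | zero =>
      simp only [pow_zero, Equiv.Perm.coe_one, id_eq] at hm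
      subst hm; exact Equiv.Perm.SameCycle.refl _ _
    | succ m ih =>
      have : (e ^ (m+1)) x = e ((e ^ m) x) := by rw [← Equiv.Perm.mul_apply, ← pow_succ']
      rw [this] at hm
      have h1 := ih ((e ^ m) x) rfl
      have h2 := sameCycle_succ p e ((e ^ m) x)
      rw [hm] at h2
      exact h1.trans h2

lemma sameCycle_zero_succ_iff (q : Fin n) (e : Perm (Fin n)) (y : Fin n) :
    (Equiv.Perm.decomposeFin.symm (q.succ, e)).SameCycle 0 y.succ ↔ e.SameCycle q y := by
  have h0 : (Equiv.Perm.decomposeFin.symm (q.succ, e)) 0 = q.succ :=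
    Equiv.Perm.decomposeFin_symm_apply_zero _ e
  have hz : (Equiv.Perm.decomposeFin.symm (q.succ, e)).SameCycle 0 q.succ := by
    have := sc_step (Equiv.Perm.decomposeFin.symm (q.succ, e)) 0
    rwa [h0] at this
  constructor
  · intro h
    exact (sameCycle_succ_iff q.succ e q y).mp (hz.symm.trans h)
  · intro h
    exact hz.trans ((sameCycle_succ_iff q.succ e q y).mpr h)

lemma sameCycle_zero_fix (e : Perm (Fin n)) (y : Fin (n+1)) :
    (Equiv.Perm.decomposeFin.symm ((0 : Fin (n+1)), e)).SameCycle 0 y ↔ y = 0 := by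
  have h0 : (Equiv.Perm.decomposeFin.symm ((0 : Fin (n+1)), e)) 0 = 0 :=
    Equiv.Perm.decomposeFin_symm_apply_zero _ e
  constructor
  · rintro ⟨m, hm⟩
    rw [Equiv.Perm.zpow_apply_eq_self_of_apply_eq_self h0 m] at hm
    exact hm.symm
  · rintro rfl; exact Equiv.Perm.SameCycle.refl _ _

lemma frobTerm_cons_zero (f : A → B) (b : A) (a : Fin n → A) (e : Perm (Fin n)) :
    frobTerm f (Fin.cons b a) (Equiv.Perm.decomposeFin.symm (0, e)) = f b * frobTerm f a e := by
  set σ := Equiv.Perm.decomposeFin.symm ((0 : Fin (n+1)), e) with hσ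
  have hsc0 : ∀ i : Fin n, ¬ σ.SameCycle i.succ 0 := by
    intro i h
    exact Fin.succ_ne_zero i ((sameCycle_zero_fix e i.succ).mp h.symm)
  have cycsucc : ∀ i : Fin n,
      (∏ j ∈ univ.filter (fun j => σ.SameCycle i.succ j), Fin.cons b a j)
      = ∏ j ∈ univ.filter (fun j => e.SameCycle i j), a j := by
    intro i
    rw [Finset.prod_filter, Finset.prod_filter, Fin.prod_univ_succ]
    rw [if_neg (hsc0 i), one_mul]
    refine Finset.prod_congr rfl fun j _ => ?_
    rw [Fin.cons_succ]
    by_cases h : e.SameCycle i j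
    · rw [if_pos ((sameCycle_succ_iff 0 e i j).mpr h), if_pos h]
    · rw [if_neg (fun hh => h ((sameCycle_succ_iff 0 e i j).mp hh)), if_neg h]
  have mins : ∀ i : Fin n,
      (∀ j, σ.SameCycle i.succ j → i.succ ≤ j) ↔ (∀ j, e.SameCycle i j → i ≤ j) := by
    intro i
    constructor
    · intro H j hj
      have := H j.succ ((sameCycle_succ_iff 0 e i j).mpr hj)
      exact Fin.succ_le_succ_iff.mp this
    · intro H j
      induction j using Fin.cases with
      | zero => exact fun hj => absurd hj (hsc0 i)
      | succ j =>
        intro hj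
        exact Fin.succ_le_succ_iff.mpr (H j ((sameCycle_succ_iff 0 e i j).mp hj))
  -- cycle of 0 is {0}
  have cyc0 : (∏ j ∈ univ.filter (fun j => σ.SameCycle 0 j), Fin.cons b a j) = b := by
    have : univ.filter (fun j => σ.SameCycle 0 j) = {(0 : Fin (n+1))} := by
      ext j
      simp only [Finset.mem_filter, Finset.mem_univ, true_and, Finset.mem_singleton]
      exact sameCycle_zero_fix e j
    rw [this, Finset.prod_singleton, Fin.cons_zero]
  rw [frobTerm, frobTerm, Finset.prod_filter, Finset.prod_filter, Fin.prod_univ_succ]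
  rw [if_pos (fun j _ => Fin.zero_le j), cyc0]
  congr 1
  refine Finset.prod_congr rfl fun i _ => ?_
  by_cases h : ∀ j, e.SameCycle i j → i ≤ j
  · rw [if_pos ((mins i).mpr h), if_pos h, cycsucc i]
  · rw [if_neg (fun hh => h ((mins i).mp hh)), if_neg h]


lemma frobTerm_cons_succ (f : A → B) (b : A) (a : Fin n → A) (q : Fin n) (e : Perm (Fin n)) :
    frobTerm f (Fin.cons b a) (Equiv.Perm.decomposeFin.symm (q.succ, e)) =
      frobTerm f (Function.update a q (b * a q)) e := by
  classical
  set σ := Equiv.Perm.decomposeFin.symm (q.succ, e) with hσ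
  set Pi : Fin n → A := fun i => ∏ j ∈ univ.filter (fun j => e.SameCycle i j), a j with hPi
  set S : Finset (Fin n) := univ.filter (fun j => e.SameCycle q j) with hS
  have hqS : q ∈ S := by
    simp only [hS, Finset.mem_filter, Finset.mem_univ, true_and]
    exact Equiv.Perm.SameCycle.refl e q
  have hSne : S.Nonempty := ⟨q, hqS⟩
  set istar : Fin n := S.min' hSne with histar
  have histar_q : e.SameCycle q istar := by
    have := S.min'_mem hSne
    simp only [hS, Finset.mem_filter, Finset.mem_univ, true_and] at this
    exact this
  have histar_min : ∀ j, e.SameCycle istar j → istar ≤ j := by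
    intro j hj
    refine S.min'_le j ?_
    simp only [hS, Finset.mem_filter, Finset.mem_univ, true_and]
    exact histar_q.trans hj
  have huniq : ∀ i, (∀ j, e.SameCycle i j → i ≤ j) → e.SameCycle i q → i = istar := by
    intro i hi hiq
    refine le_antisymm (hi istar (hiq.trans histar_q)) ?_
    refine S.min'_le i ?_
    simp only [hS, Finset.mem_filter, Finset.mem_univ, true_and]
    exact hiq.symm
  -- σ same-cycle with 0
  have hsc0 : ∀ i : Fin n, σ.SameCycle i.succ 0 ↔ e.SameCycle i q := by
    intro i
    rw [Equiv.Perm.sameCycle_comm, sameCycle_zero_succ_iff, Equiv.Perm.sameCycle_comm]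
  -- minimal representatives of σ among successors
  have mins : ∀ i : Fin n,
      (∀ j, σ.SameCycle i.succ j → i.succ ≤ j) ↔
        ((∀ j, e.SameCycle i j → i ≤ j) ∧ ¬ e.SameCycle i q) := by
    intro i
    constructor
    · intro H
      constructor
      · intro j hj
        exact Fin.succ_le_succ_iff.mp (H j.succ ((sameCycle_succ_iff q.succ e i j).mpr hj))
      · intro hiq
        have := H 0 ((hsc0 i).mpr hiq)
        exact absurd (Fin.le_zero_iff.mp this) (Fin.succ_ne_zero i)
    · rintro ⟨He, Hq⟩ j
      induction j using Fin.cases with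
      | zero => exact fun hj => absurd ((hsc0 i).mp hj) Hq
      | succ j =>
        intro hj
        exact Fin.succ_le_succ_iff.mpr (He j ((sameCycle_succ_iff q.succ e i j).mp hj))
  -- cycle product at 0
  have cyc0 : (∏ j ∈ univ.filter (fun j => σ.SameCycle 0 j), Fin.cons b a j)
      = b * ∏ j ∈ S, a j := by
    rw [Finset.prod_filter, Fin.prod_univ_succ, if_pos (Equiv.Perm.SameCycle.refl σ 0),
      Fin.cons_zero]
    congr 1
    rw [hS, Finset.prod_filter]
    refine Finset.prod_congr rfl fun j _ => ?_
    rw [Fin.cons_succ]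
    by_cases h : e.SameCycle q j
    · rw [if_pos ((sameCycle_zero_succ_iff q e j).mpr h), if_pos h]
    · rw [if_neg (fun hh => h ((sameCycle_zero_succ_iff q e j).mp hh)), if_neg h]
  -- cycle products at successors not in q's cycle
  have cycsucc : ∀ i : Fin n, ¬ e.SameCycle i q →
      (∏ j ∈ univ.filter (fun j => σ.SameCycle i.succ j), Fin.cons b a j) = Pi i := by
    intro i hiq
    simp only [hPi]
    rw [Finset.prod_filter, Finset.prod_filter, Fin.prod_univ_succ]
    rw [if_neg (fun hh => hiq ((hsc0 i).mp hh)), one_mul]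
    refine Finset.prod_congr rfl fun j _ => ?_
    rw [Fin.cons_succ]
    by_cases h : e.SameCycle i j
    · rw [if_pos ((sameCycle_succ_iff q.succ e i j).mpr h), if_pos h]
    · rw [if_neg (fun hh => h ((sameCycle_succ_iff q.succ e i j).mp hh)), if_neg h]
  -- LHS
  have hLHS : frobTerm f (Fin.cons b a) σ =
      f (b * ∏ j ∈ S, a j) *
        ∏ i ∈ univ.filter (fun i => (∀ j, e.SameCycle i j → i ≤ j) ∧ ¬ e.SameCycle i q),
          f (Pi i) := by
    rw [frobTerm, Finset.prod_filter, Fin.prod_univ_succ, if_pos (fun j _ => Fin.zero_le j), cyc0]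
    congr 1
    rw [Finset.prod_filter]
    refine Finset.prod_congr rfl fun i _ => ?_
    by_cases h : (∀ j, e.SameCycle i j → i ≤ j) ∧ ¬ e.SameCycle i q
    · rw [if_pos ((mins i).mpr h), if_pos h, cycsucc i h.2]
    · rw [if_neg (fun hh => h ((mins i).mp hh)), if_neg h]
  -- RHS
  have histar_mem : istar ∈ univ.filter (fun i => ∀ j, e.SameCycle i j → i ≤ j) := by
    simp only [Finset.mem_filter, Finset.mem_univ, true_and]
    exact histar_min
  have hcyc_istar : univ.filter (fun j => e.SameCycle istar j) = S := by
    ext j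
    simp only [hS, Finset.mem_filter, Finset.mem_univ, true_and]
    exact ⟨fun h => histar_q.trans h, fun h => histar_q.symm.trans h⟩
  have hupd_istar : (∏ j ∈ univ.filter (fun j => e.SameCycle istar j),
      Function.update a q (b * a q) j) = b * ∏ j ∈ S, a j := by
    rw [hcyc_istar, Finset.prod_update_of_mem hqS, Finset.prod_eq_mul_prod_sdiff_singleton_of_mem hqS a,
      ← mul_assoc]
  have herase : (univ.filter (fun i => ∀ j, e.SameCycle i j → i ≤ j)).erase istar =
      univ.filter (fun i => (∀ j, e.SameCycle i j → i ≤ j) ∧ ¬ e.SameCycle i q) := by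
    ext i
    simp only [Finset.mem_erase, Finset.mem_filter, Finset.mem_univ, true_and]
    constructor
    · rintro ⟨hne, hmin⟩
      exact ⟨hmin, fun hiq => hne (huniq i hmin hiq)⟩
    · rintro ⟨hmin, hiq⟩
      refine ⟨fun heq => hiq ?_, hmin⟩
      rw [heq]
      exact histar_q.symm
  have hupd_other : ∀ i, ¬ e.SameCycle i q →
      (∏ j ∈ univ.filter (fun j => e.SameCycle i j), Function.update a q (b * a q) j) = Pi i := by
    intro i hiq
    refine Finset.prod_congr rfl fun j hj => ?_
    simp only [Finset.mem_filter, Finset.mem_univ, true_and] at hj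
    refine Function.update_of_ne (fun hjq => hiq ?_) _ a
    rw [← hjq]
    exact hj
  rw [hLHS, frobTerm, ← Finset.mul_prod_erase _ _ histar_mem, hupd_istar, herase]
  congr 1
  refine Finset.prod_congr rfl fun i hi => ?_
  simp only [Finset.mem_filter, Finset.mem_univ, true_and] at hi
  rw [hupd_other i hi.2]



lemma phiPerm_cons (f : A → B) (b : A) (a : Fin n → A) :
    PhiPerm f (Fin.cons b a) =
      f b * PhiPerm f a - ∑ j : Fin n, PhiPerm f (Function.update a j (b * a j)) := by
  classical
  rw [PhiPerm]
  rw [← Equiv.sum_comp (Equiv.Perm.decomposeFin.symm :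
      (Fin (n+1) × Perm (Fin n)) ≃ Perm (Fin (n+1)))
      (fun σ => (Equiv.Perm.sign σ : ℤ) • frobTerm f (Fin.cons b a) σ)]
  rw [Fintype.sum_prod_type, Fin.sum_univ_succ]
  have h0 : ∑ e : Perm (Fin n),
      (Equiv.Perm.sign (Equiv.Perm.decomposeFin.symm ((0 : Fin (n+1)), e)) : ℤ) •
        frobTerm f (Fin.cons b a) (Equiv.Perm.decomposeFin.symm (0, e))
      = f b * PhiPerm f a := by
    rw [PhiPerm, Finset.mul_sum]
    refine Finset.sum_congr rfl fun e _ => ?_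
    rw [frobTerm_cons_zero, Equiv.Perm.decomposeFin.symm_sign, if_pos rfl, one_mul,
      mul_smul_comm]
  have h1 : ∀ q : Fin n, ∑ e : Perm (Fin n),
      (Equiv.Perm.sign (Equiv.Perm.decomposeFin.symm (q.succ, e)) : ℤ) •
        frobTerm f (Fin.cons b a) (Equiv.Perm.decomposeFin.symm (q.succ, e))
      = - PhiPerm f (Function.update a q (b * a q)) := by
    intro q
    rw [PhiPerm, ← Finset.sum_neg_distrib]
    refine Finset.sum_congr rfl fun e _ => ?_
    rw [frobTerm_cons_succ, Equiv.Perm.decomposeFin.symm_sign, if_neg (Fin.succ_ne_zero q)]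
    push_cast
    rw [neg_mul, one_mul, neg_smul]
  rw [h0]
  rw [Finset.sum_congr rfl (fun q _ => h1 q), Finset.sum_neg_distrib, sub_eq_add_neg]

lemma phiPerm_nil (f : A → B) (bv : Fin 0 → A) : PhiPerm f bv = 1 := by
  rw [PhiPerm, Fintype.sum_subsingleton _ 1]
  simp [frobTerm]

lemma f_mul_phi (f : A → B) (hf : ∀ v : Fin (n+1) → A, PhiPerm f v = 0)
    (a : Fin n → A) (b : A) :
    f b * PhiPerm f a = ∑ j : Fin n, PhiPerm f (Function.update a j (b * a j)) := by
  have h := hf (Fin.cons b a)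
  rw [phiPerm_cons] at h
  exact sub_eq_zero.mp h

lemma phi_mul_inj (f : A → B) (hf : ∀ v : Fin (n+1) → A, PhiPerm f v = 0) :
    ∀ (l : ℕ) (a : Fin n → A) (bv : Fin l → A),
      PhiPerm f a * PhiPerm f bv =
        ∑ g : Fin l → Fin n, if Function.Injective g then
          PhiPerm f (fun i => a i * ∏ j ∈ univ.filter (fun j => g j = i), bv j) else 0 := by
  intro l
  induction l with
  | zero =>
    intro a bv
    rw [phiPerm_nil, mul_one, Fintype.sum_subsingleton _ (Fin.elim0 : Fin 0 → Fin n)]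
    rw [if_pos (Function.injective_of_subsingleton _)]
    congr 1
    funext i
    simp
  | succ l ih =>
    intro a bv
    have hbv : bv = Fin.cons (bv 0) (Fin.tail bv) := (Fin.cons_self_tail bv).symm
    rw [hbv, phiPerm_cons f (bv 0) (Fin.tail bv)]
    set b0 := bv 0 with hb0
    set bt := Fin.tail bv with hbt
    rw [mul_sub, Finset.mul_sum]
    have E1 : PhiPerm f a * (f b0 * PhiPerm f bt)
        = ∑ i : Fin n, ∑ g : Fin l → Fin n, if Function.Injective g then
            PhiPerm f (fun m => Function.update a i (b0 * a i) m *
              ∏ j ∈ univ.filter (fun j => g j = m), bt j) else 0 := by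
      rw [← mul_assoc, mul_comm (PhiPerm f a) (f b0), f_mul_phi f hf a b0, Finset.sum_mul]
      exact Finset.sum_congr rfl fun i _ => ih (Function.update a i (b0 * a i)) bt
    have E2 : ∀ j : Fin l, PhiPerm f a * PhiPerm f (Function.update bt j (b0 * bt j))
        = ∑ g : Fin l → Fin n, if Function.Injective g then
            PhiPerm f (fun m => a m *
              ∏ j' ∈ univ.filter (fun j' => g j' = m),
                Function.update bt j (b0 * bt j) j') else 0 :=
      fun j => ih a (Function.update bt j (b0 * bt j))
    have E3 : (∑ g : Fin (l+1) → Fin n, if Function.Injective g then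
          PhiPerm f (fun i => a i *
            ∏ j ∈ univ.filter (fun j => g j = i), Fin.cons b0 bt j) else 0)
        = ∑ i : Fin n, ∑ g : Fin l → Fin n,
            if Function.Injective (Fin.cons i g : Fin (l+1) → Fin n) then
              PhiPerm f (fun m => a m *
                ∏ j ∈ univ.filter (fun j => (Fin.cons i g : Fin (l+1) → Fin n) j = m),
                  Fin.cons b0 bt j) else 0 := by
      rw [← Equiv.sum_comp (Fin.consEquiv (fun _ => Fin n))
        (fun g : Fin (l+1) → Fin n => if Function.Injective g then
          PhiPerm f (fun i => a i *
            ∏ j ∈ univ.filter (fun j => g j = i), Fin.cons b0 bt j) else 0),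
        Fintype.sum_prod_type]
      rfl
    rw [E1, Finset.sum_congr rfl (fun j _ => E2 j), E3]
    clear E1 E2 E3
    -- pointwise rewriting of the RHS
    have K2 : ∀ (i : Fin n) (g : Fin l → Fin n) (m : Fin n),
        (∏ j ∈ univ.filter (fun j => (Fin.cons i g : Fin (l+1) → Fin n) j = m),
          Fin.cons b0 bt j)
        = (if i = m then b0 else 1) * ∏ j ∈ univ.filter (fun j => g j = m), bt j := by
      intro i g m
      rw [Finset.prod_filter, Finset.prod_filter, Fin.prod_univ_succ]
      simp only [Fin.cons_zero, Fin.cons_succ]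
    have KEY : ∀ (i : Fin n) (g : Fin l → Fin n),
        (if Function.Injective (Fin.cons i g : Fin (l+1) → Fin n) then
          PhiPerm f (fun m => a m *
            ∏ j ∈ univ.filter (fun j => (Fin.cons i g : Fin (l+1) → Fin n) j = m),
              Fin.cons b0 bt j) else 0)
        = (if Function.Injective g ∧ i ∉ univ.image g then
            PhiPerm f (fun m => a m * ((if i = m then b0 else 1) *
              ∏ j ∈ univ.filter (fun j => g j = m), bt j)) else 0) := by
      intro i g
      refine if_congr ?_ ?_ rfl
      · rw [Fin.cons_injective_iff]
        simp only [Set.mem_range, Finset.mem_image, Finset.mem_univ, true_and, and_comm]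
      · congr 1
        funext m
        rw [K2 i g m]
    rw [Finset.sum_congr rfl (fun i _ => Finset.sum_congr rfl (fun g _ => KEY i g))]
    clear KEY K2
    rw [Finset.sum_comm (γ := Fin n) (f := fun i g => if Function.Injective g then
          PhiPerm f (fun m => Function.update a i (b0 * a i) m *
            ∏ j ∈ univ.filter (fun j => g j = m), bt j) else 0)]
    rw [Finset.sum_comm (γ := Fin l) (f := fun j g => if Function.Injective g then
          PhiPerm f (fun m => a m *
            ∏ j' ∈ univ.filter (fun j' => g j' = m),
              Function.update bt j (b0 * bt j) j') else 0)]
    rw [Finset.sum_comm (γ := Fin n) (f := fun i g => if Function.Injective g ∧ i ∉ univ.image g then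
          PhiPerm f (fun m => a m * ((if i = m then b0 else 1) *
            ∏ j ∈ univ.filter (fun j => g j = m), bt j)) else 0)]
    rw [← Finset.sum_sub_distrib]
    refine Finset.sum_congr rfl fun g _ => ?_
    by_cases hg : Function.Injective g
    · simp only [hg, if_true, true_and]
      have F1 : ∀ i : Fin n,
          PhiPerm f (fun m => Function.update a i (b0 * a i) m *
            ∏ j ∈ univ.filter (fun j => g j = m), bt j)
          = PhiPerm f (fun m => a m * ((if i = m then b0 else 1) *
              ∏ j ∈ univ.filter (fun j => g j = m), bt j)) := by
        intro i
        congr 1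
        funext m
        by_cases hmi : m = i
        · subst hmi
          rw [Function.update_self, if_pos rfl]
          ring
        · rw [Function.update_of_ne hmi, if_neg (fun h => hmi h.symm)]
          ring
      have F2 : ∀ j : Fin l,
          PhiPerm f (fun m => a m *
            ∏ j' ∈ univ.filter (fun j' => g j' = m),
              Function.update bt j (b0 * bt j) j')
          = PhiPerm f (fun m => a m * ((if g j = m then b0 else 1) *
              ∏ j' ∈ univ.filter (fun j' => g j' = m), bt j')) := by
        intro j
        congr 1
        funext m
        by_cases hm : g j = m
        · subst hm
          have hset : univ.filter (fun j' => g j' = g j) = {j} := by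
            ext j'
            simp only [Finset.mem_filter, Finset.mem_univ, true_and, Finset.mem_singleton]
            exact ⟨fun h => hg h, fun h => by rw [h]⟩
          rw [hset, Finset.prod_singleton, Finset.prod_singleton, Function.update_self,
            if_pos rfl]
        · rw [if_neg hm, one_mul]
          congr 1
          refine Finset.prod_congr rfl fun j' hj' => ?_
          simp only [Finset.mem_filter, Finset.mem_univ, true_and] at hj'
          exact Function.update_of_ne (fun h => hm (by rw [← h]; exact hj')) _ bt
      rw [Finset.sum_congr rfl (fun i _ => F1 i), Finset.sum_congr rfl (fun j _ => F2 j)]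
      have himgsum : (∑ j : Fin l, PhiPerm f (fun m => a m * ((if g j = m then b0 else 1) *
              ∏ j' ∈ univ.filter (fun j' => g j' = m), bt j')))
          = ∑ i ∈ univ.image g, PhiPerm f (fun m => a m * ((if i = m then b0 else 1) *
              ∏ j' ∈ univ.filter (fun j' => g j' = m), bt j')) :=
        (Finset.sum_image (f := fun i => PhiPerm f (fun m => a m * ((if i = m then b0 else 1) *
          ∏ j' ∈ univ.filter (fun j' => g j' = m), bt j'))) (g := g) (s := univ)
          (fun x _ y _ h => hg h)).symm
      rw [himgsum]
      rw [eq_comm]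
      have hsub : univ.image g ⊆ univ := Finset.subset_univ _
      rw [← Finset.sum_sdiff_eq_sub hsub]
      rw [← Finset.sum_filter]
      refine Finset.sum_congr ?_ (fun _ _ => rfl)
      ext i
      simp [Finset.mem_sdiff]
    · simp only [hg, if_false, false_and, Finset.sum_const_zero, sub_zero]


lemma phi_mul_phi (f : A → B) (hf : ∀ v : Fin (n+1) → A, PhiPerm f v = 0) (a bv : Fin n → A) :
    PhiPerm f a * PhiPerm f bv =
      ∑ τ : Equiv.Perm (Fin n), PhiPerm f (fun i => a i * bv (τ⁻¹ i)) := by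
  classical
  rw [phi_mul_inj f hf n a bv, ← Finset.sum_filter]
  have hbij : ∀ g ∈ univ.filter (fun g : Fin n → Fin n => Function.Injective g),
      Function.Bijective g := fun g hg =>
    Function.Injective.bijective_of_finite ((Finset.mem_filter.mp hg).2)
  refine Finset.sum_bij' (fun g hg => Equiv.ofBijective g (hbij g hg))
    (fun τ _ => (τ : Fin n → Fin n)) (fun g hg => Finset.mem_univ _) ?_
    (fun g hg => rfl) (fun τ _ => Equiv.ext fun x => rfl) ?_
  · intro τ _
    simp only [Finset.mem_filter, Finset.mem_univ, true_and]
    exact τ.injective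
  · intro g hg
    congr 1
    funext i
    congr 1
    have hset : univ.filter (fun j => g j = i)
        = {(Equiv.ofBijective g (hbij g hg))⁻¹ i} := by
      ext j
      simp only [Finset.mem_filter, Finset.mem_univ, true_and, Finset.mem_singleton]
      exact Equiv.apply_eq_iff_eq_symm_apply (Equiv.ofBijective g (hbij g hg))
    rw [hset, Finset.prod_singleton]


lemma nat_prod_sub : ∀ m : ℕ, ∏ i ∈ Finset.range m, (m - i) = m.factorial := by
  intro m
  induction m with
  | zero => simp
  | succ m ih =>
    rw [Finset.prod_range_succ']
    simp only [Nat.succ_sub_succ_eq_sub, Nat.sub_zero]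
    rw [ih, Nat.factorial_succ, mul_comm]

lemma phi_ones (f : A → B) (hone : f 1 = (n : B)) :
    ∀ m : ℕ, PhiPerm f (fun _ : Fin m => (1:A)) = ∏ i ∈ Finset.range m, ((n:B) - i) := by
  intro m
  induction m with
  | zero => rw [phiPerm_nil, Finset.prod_range_zero]
  | succ m ih =>
    have hc : (fun _ : Fin (m+1) => (1:A)) = Fin.cons 1 (fun _ => 1) := by
      funext i
      induction i using Fin.cases <;> simp
    rw [hc, phiPerm_cons, hone]
    have hupd : ∀ j : Fin m, Function.update (fun _ : Fin m => (1:A)) j (1 * 1)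
        = fun _ => (1:A) := by
      intro j
      rw [one_mul]
      exact Function.update_eq_self j (fun _ => (1:A))
    rw [Finset.sum_congr rfl (fun j _ => by rw [hupd j, ih]), Finset.sum_const,
      Finset.card_univ, Fintype.card_fin, ih, Finset.prod_range_succ]
    rw [nsmul_eq_mul]
    ring

lemma phi_ones_n (f : A → B) (hone : f 1 = (n : B)) :
    PhiPerm f (fun _ : Fin n => (1:A)) = (n.factorial : B) := by
  rw [phi_ones f hone n]
  have hcast : ∀ i ∈ Finset.range n, ((n:B) - (i:B)) = ((n - i : ℕ) : B) := by
    intro i hi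
    rw [Nat.cast_sub (le_of_lt (Finset.mem_range.mp hi))]
  rw [Finset.prod_congr rfl hcast, ← Nat.cast_prod, nat_prod_sub]

end FrobAux


open scoped TensorProduct in
open PiTensorProduct in
/-- Theorem 2.8: if `f` is a Frobenius `n`-homomorphism, then `Φ_n(f)/n!`,
restricted to the subalgebra of symmetric tensors in `A^{⊗n}`, is a ring
homomorphism.  Here `M` is the multilinear extension of `Φ_n(f)` to `A^{⊗n}`
(its lift is the linear extension), a tensor is symmetric when it is fixed by
every permutation of the factors, and being a ring homomorphism amounts to
multiplicativity and unitality (additivity holds since the lift is linear). -/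
theorem phi_div_factorial_ringHom_on_symmetric {k : Type*} [Field k] [CharZero k]
    [Algebra k A] [Algebra k B] (n : ℕ) (f : A →ₗ[k] B)
    (hf : IsFrobeniusHom (f : A → B) n)
    (M : MultilinearMap k (fun _ : Fin n => A) B)
    (hM : ∀ a : Fin n → A, M a = PhiPerm (f : A → B) a) :
    (∀ x y : ⨂[k] (_ : Fin n), A,
      (∀ σ : Equiv.Perm (Fin n), reindex k (fun _ => A) σ x = x) →
      (∀ σ : Equiv.Perm (Fin n), reindex k (fun _ => A) σ y = y) →
      (n.factorial : k)⁻¹ • lift M (x * y) =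
        ((n.factorial : k)⁻¹ • lift M x) * ((n.factorial : k)⁻¹ • lift M y)) ∧
    (n.factorial : k)⁻¹ • lift M (1 : ⨂[k] (_ : Fin n), A) = 1 := by
  classical
  obtain ⟨hf1, hf2⟩ := hf
  have hne : (n.factorial : k) ≠ 0 := Nat.cast_ne_zero.mpr (Nat.factorial_ne_zero n)
  have key : ∀ x y : ⨂[k] (_ : Fin n), A,
      lift M x * lift M y =
        ∑ τ : Equiv.Perm (Fin n), lift M (x * reindex k (fun _ => A) τ y) := by
    intro x y
    induction x using PiTensorProduct.induction_on with
    | smul_tprod r av =>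
      induction y using PiTensorProduct.induction_on with
      | smul_tprod s bv =>
        have lhs : lift M (r • tprod k av) * lift M (s • tprod k bv)
            = (r * s) • (PhiPerm (f : A → B) av * PhiPerm (f : A → B) bv) := by
          rw [map_smul, map_smul, lift.tprod, lift.tprod, hM, hM, smul_mul_smul_comm]
        rw [lhs, FrobAux.phi_mul_phi (f : A → B) hf1 av bv, Finset.smul_sum]
        refine Finset.sum_congr rfl fun τ _ => ?_
        rw [LinearEquiv.map_smul, reindex_tprod, smul_mul_smul_comm, tprod_mul_tprod,
          map_smul, lift.tprod, hM]
        rfl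
      | add y1 y2 h1 h2 =>
        rw [map_add, mul_add, h1, h2, ← Finset.sum_add_distrib]
        refine Finset.sum_congr rfl fun τ _ => ?_
        rw [map_add, mul_add, map_add]
    | add x1 x2 h1 h2 =>
      rw [map_add, add_mul, h1, h2, ← Finset.sum_add_distrib]
      refine Finset.sum_congr rfl fun τ _ => ?_
      rw [add_mul, map_add]
  constructor
  · intro x y _ hy
    have h1 : lift M x * lift M y = (n.factorial : ℕ) • lift M (x * y) := by
      rw [key x y, Finset.sum_congr rfl (fun τ _ => by rw [hy τ]), Finset.sum_const,
        Finset.card_univ, Fintype.card_perm, Fintype.card_fin]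
    have h2 : ((n.factorial : k)⁻¹ • lift M x) * ((n.factorial : k)⁻¹ • lift M y)
        = ((n.factorial : k)⁻¹ * (n.factorial : k)⁻¹) • (lift M x * lift M y) :=
      smul_mul_smul_comm _ _ _ _
    rw [h2, h1, ← Nat.cast_smul_eq_nsmul k, smul_smul]
    congr 1
    field_simp
  · have hone : (1 : ⨂[k] (_ : Fin n), A) = tprod k (fun _ : Fin n => (1:A)) := rfl
    rw [hone, lift.tprod, hM, FrobAux.phi_ones_n (f : A → B) hf2]
    have hcast : ((n.factorial : ℕ) : B) = algebraMap k B ((n.factorial : ℕ) : k) := by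
      rw [map_natCast]
    rw [hcast, Algebra.smul_def, ← _root_.map_mul, inv_mul_cancel₀ hne, _root_.map_one]
end

section
/- Let f, g : A → B be Frobenius m- and n-homomorphisms respectively between commutative algebras over a field of characteristic zero. Then f + g is a Frobenius (m+n)-homomorphism. -/
open Finset

variable {A B : Type*} [CommRing A] [CommRing B]
section transfer

open Equiv Equiv.Perm

/-- Transfer of `SameCycle` along a map `W` intertwining steps. -/
lemma sameCycle_transfer {α β : Type*} [Finite α] {π : Perm α} {g : Perm β} {W : α → β}
    (h : ∀ u, g.SameCycle (W u) (W (π u))) {u v : α} (huv : π.SameCycle u v) :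
    g.SameCycle (W u) (W v) := by
  obtain ⟨i, -, rfl⟩ := huv.exists_pow_eq'
  clear huv
  induction i with
  | zero => simpa using Equiv.Perm.SameCycle.refl g (W u)
  | succ k ih =>
      have : (π ^ (k+1)) u = π ((π ^ k) u) := by
        rw [pow_succ'] ; rfl
      rw [this]
      exact ih.trans (h _)

lemma sameCycle_step {β : Type*} (g : Perm β) (x : β) : g.SameCycle x (g x) := ⟨1, rfl⟩

end transfer

section consrec

open Equiv Equiv.Perm

variable {n : ℕ} (σ : Equiv.Perm (Fin n)) (b : A) (a : Fin n → A)

/-- behavior of `decomposeFin.symm (0, σ)` -/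
lemma dz_zero : (Equiv.Perm.decomposeFin.symm (0, σ)) 0 = 0 :=
  Equiv.Perm.decomposeFin_symm_apply_zero 0 σ

lemma dz_succ (x : Fin n) : (Equiv.Perm.decomposeFin.symm (0, σ)) x.succ = (σ x).succ := by
  rw [Equiv.Perm.decomposeFin_symm_apply_succ]
  simp

lemma dz_sameCycle_succ {x y : Fin n} :
    (Equiv.Perm.decomposeFin.symm (0, σ)).SameCycle x.succ y.succ ↔ σ.SameCycle x y := by
  set π := Equiv.Perm.decomposeFin.symm (0, σ) with hπ
  constructor
  · intro h
    have := sameCycle_transfer (π := π) (g := σ) (W := fun u => Fin.cases x (fun y => y) u)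
      (fun u => by
        refine Fin.cases ?_ (fun z => ?_) u
        · rw [hπ, dz_zero]
        · rw [dz_succ]; simpa using sameCycle_step σ z) h
    simpa using this
  · intro h
    exact sameCycle_transfer (π := σ) (g := π) (W := Fin.succ)
      (fun u => by rw [← dz_succ σ u]; exact sameCycle_step π _) h

lemma dz_not_sameCycle_zero (x : Fin n) :
    ¬ (Equiv.Perm.decomposeFin.symm (0, σ)).SameCycle 0 x.succ := by
  rintro ⟨k, hk⟩
  rw [Equiv.Perm.zpow_apply_eq_self_of_apply_eq_self (dz_zero σ)] at hk
  exact (Fin.succ_ne_zero x) hk.symm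

variable (q : Fin n)

lemma ds_zero : (Equiv.Perm.decomposeFin.symm (q.succ, σ)) 0 = q.succ :=
  Equiv.Perm.decomposeFin_symm_apply_zero q.succ σ

lemma ds_succ_eq (x : Fin n) (hx : σ x = q) :
    (Equiv.Perm.decomposeFin.symm (q.succ, σ)) x.succ = 0 := by
  rw [Equiv.Perm.decomposeFin_symm_apply_succ, hx, Equiv.swap_apply_right]

lemma ds_succ_ne (x : Fin n) (hx : σ x ≠ q) :
    (Equiv.Perm.decomposeFin.symm (q.succ, σ)) x.succ = (σ x).succ := by
  rw [Equiv.Perm.decomposeFin_symm_apply_succ, Equiv.swap_apply_of_ne_of_ne]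
  · exact Fin.succ_ne_zero _
  · simpa [Fin.succ_inj] using hx

/-- one step: `x.succ` is in the same `π`-cycle as `(σ x).succ`. -/
lemma ds_step (x : Fin n) :
    (Equiv.Perm.decomposeFin.symm (q.succ, σ)).SameCycle x.succ (σ x).succ := by
  set π := Equiv.Perm.decomposeFin.symm (q.succ, σ) with hπ
  by_cases hx : σ x = q
  · refine ⟨2, ?_⟩
    have h1 : π x.succ = 0 := ds_succ_eq σ q x hx
    have h2 : π 0 = q.succ := ds_zero σ q
    show π (π x.succ) = _
    rw [h1, h2, hx]
  · exact (ds_succ_ne σ q x hx) ▸ sameCycle_step π _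

lemma ds_sameCycle_proj {u v : Fin (n+1)}
    (h : (Equiv.Perm.decomposeFin.symm (q.succ, σ)).SameCycle u v) :
    σ.SameCycle (Fin.cases q (fun y => y) u) (Fin.cases q (fun y => y) v) := by
  set π := Equiv.Perm.decomposeFin.symm (q.succ, σ) with hπ
  refine sameCycle_transfer (π := π) (g := σ) (W := fun u => Fin.cases q (fun y => y) u)
    (fun u => ?_) h
  refine Fin.cases ?_ (fun z => ?_) u
  · rw [hπ, ds_zero]; simp
    exact Equiv.Perm.SameCycle.refl _ _
  · by_cases hz : σ z = q
    · rw [hπ, ds_succ_eq σ q z hz]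
      simpa [hz] using sameCycle_step σ z
    · rw [hπ, ds_succ_ne σ q z hz]
      simpa using sameCycle_step σ z

lemma ds_sameCycle_succ {x y : Fin n} :
    (Equiv.Perm.decomposeFin.symm (q.succ, σ)).SameCycle x.succ y.succ ↔ σ.SameCycle x y := by
  constructor
  · intro h; simpa using ds_sameCycle_proj σ q h
  · intro h
    exact sameCycle_transfer (π := σ) (g := Equiv.Perm.decomposeFin.symm (q.succ, σ))
      (W := Fin.succ) (fun u => ds_step σ q u) h

lemma ds_sameCycle_zero_succ {y : Fin n} :
    (Equiv.Perm.decomposeFin.symm (q.succ, σ)).SameCycle 0 y.succ ↔ σ.SameCycle q y := by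
  constructor
  · intro h; simpa using ds_sameCycle_proj σ q h
  · intro h
    refine Equiv.Perm.SameCycle.trans ?_ ((ds_sameCycle_succ σ q).2 h)
    exact (ds_zero σ q) ▸ sameCycle_step _ 0

/-- the minimal-representatives set for `decomposeFin.symm (0, σ)`. -/
lemma dz_fset :
    (Finset.univ.filter (fun i => ∀ j, (Equiv.Perm.decomposeFin.symm (0, σ)).SameCycle i j → i ≤ j))
      = insert 0 ((Finset.univ.filter (fun i => ∀ j, σ.SameCycle i j → i ≤ j)).map
          (Fin.succEmb n)) := by
  ext x
  refine Fin.cases ?_ (fun y => ?_) x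
  · simp [Fin.zero_le]
  · simp only [Finset.mem_filter, Finset.mem_univ, true_and, Finset.mem_insert,
      Finset.mem_map, Fin.coe_succEmb]
    constructor
    · intro h
      refine Or.inr ⟨y, ⟨fun z hz => ?_, rfl⟩⟩
      have := h z.succ ((dz_sameCycle_succ σ).2 hz)
      exact Fin.succ_le_succ_iff.1 this
    · rintro (h | ⟨z, hz, hzy⟩)
      · exact absurd h (Fin.succ_ne_zero y)
      · intro j
        obtain rfl : z = y := by simpa [Fin.succ_inj] using hzy
        refine Fin.cases ?_ (fun w => ?_) j <;> intro hsc
        · exact absurd hsc.symm (dz_not_sameCycle_zero σ z)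
        · exact Fin.succ_le_succ_iff.2 (hz w ((dz_sameCycle_succ σ).1 hsc))

lemma dz_cyc_zero :
    (Finset.univ.filter (fun j => (Equiv.Perm.decomposeFin.symm (0, σ)).SameCycle 0 j)) = {0} := by
  ext x
  refine Fin.cases ?_ (fun y => ?_) x
  · simp [Equiv.Perm.SameCycle.refl]
  · simp [dz_not_sameCycle_zero σ y, Fin.succ_ne_zero]

lemma dz_cyc_succ (y : Fin n) :
    (Finset.univ.filter (fun j => (Equiv.Perm.decomposeFin.symm (0, σ)).SameCycle y.succ j))
      = (Finset.univ.filter (fun j => σ.SameCycle y j)).map (Fin.succEmb n) := by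
  ext x
  refine Fin.cases ?_ (fun z => ?_) x
  · simp only [Finset.mem_filter, Finset.mem_univ, true_and, Finset.mem_map, Fin.coe_succEmb]
    constructor
    · intro h; exact absurd h.symm (dz_not_sameCycle_zero σ y)
    · rintro ⟨z, hz, hzy⟩; exact absurd hzy (Fin.succ_ne_zero z)
  · simp only [Finset.mem_filter, Finset.mem_univ, true_and, Finset.mem_map, Fin.coe_succEmb]
    constructor
    · intro h; exact ⟨z, (dz_sameCycle_succ σ).1 h, rfl⟩
    · rintro ⟨w, hw, hwz⟩
      obtain rfl : w = z := by simpa [Fin.succ_inj] using hwz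
      exact (dz_sameCycle_succ σ).2 hw

lemma frob_cons_zero (f : A → B) :
    frobTerm f (Fin.cons b a) (Equiv.Perm.decomposeFin.symm (0, σ)) = f b * frobTerm f a σ := by
  rw [frobTerm, dz_fset, Finset.prod_insert (by simp [Fin.succ_ne_zero]), dz_cyc_zero]
  congr 1
  · congr 1
    simp
  · rw [Finset.prod_map]
    refine Finset.prod_congr rfl (fun y hy => ?_)
    rw [Fin.coe_succEmb, dz_cyc_succ, Finset.prod_map]
    congr 1

lemma ds_fset :
    (Finset.univ.filter
        (fun i => ∀ j, (Equiv.Perm.decomposeFin.symm (q.succ, σ)).SameCycle i j → i ≤ j))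
      = insert 0 ((Finset.univ.filter
          (fun i => (∀ j, σ.SameCycle i j → i ≤ j) ∧ ¬ σ.SameCycle i q)).map
          (Fin.succEmb n)) := by
  ext x
  refine Fin.cases ?_ (fun y => ?_) x
  · simp [Fin.zero_le]
  · simp only [Finset.mem_filter, Finset.mem_univ, true_and, Finset.mem_insert,
      Finset.mem_map, Fin.coe_succEmb]
    constructor
    · intro h
      refine Or.inr ⟨y, ⟨⟨fun z hz => ?_, fun hyq => ?_⟩, rfl⟩⟩
      · exact Fin.succ_le_succ_iff.1 (h z.succ ((ds_sameCycle_succ σ q).2 hz))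
      · have h0 : (Equiv.Perm.decomposeFin.symm (q.succ, σ)).SameCycle y.succ 0 :=
          ((ds_sameCycle_zero_succ σ q).2 hyq.symm).symm
        exact absurd (h 0 h0) (by simp [Fin.succ_ne_zero])
    · rintro (h | ⟨z, hz, hzy⟩)
      · exact absurd h (Fin.succ_ne_zero y)
      · intro j
        obtain rfl : z = y := by simpa [Fin.succ_inj] using hzy
        refine Fin.cases ?_ (fun w => ?_) j <;> intro hsc
        · exact absurd ((ds_sameCycle_zero_succ σ q).1 hsc.symm).symm hz.2
        · exact Fin.succ_le_succ_iff.2 (hz.1 w ((ds_sameCycle_succ σ q).1 hsc))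

lemma ds_cyc_zero :
    (Finset.univ.filter (fun j => (Equiv.Perm.decomposeFin.symm (q.succ, σ)).SameCycle 0 j))
      = insert 0 ((Finset.univ.filter (fun j => σ.SameCycle q j)).map (Fin.succEmb n)) := by
  ext x
  refine Fin.cases ?_ (fun y => ?_) x
  · simp [Equiv.Perm.SameCycle.refl]
  · simp only [Finset.mem_filter, Finset.mem_univ, true_and, Finset.mem_insert,
      Finset.mem_map, Fin.coe_succEmb]
    constructor
    · intro h
      exact Or.inr ⟨y, (ds_sameCycle_zero_succ σ q).1 h, rfl⟩
    · rintro (h | ⟨z, hz, hzy⟩)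
      · exact absurd h (Fin.succ_ne_zero y)
      · obtain rfl : z = y := by simpa [Fin.succ_inj] using hzy
        exact (ds_sameCycle_zero_succ σ q).2 hz

lemma ds_cyc_succ (y : Fin n) (hy : ¬ σ.SameCycle y q) :
    (Finset.univ.filter (fun j => (Equiv.Perm.decomposeFin.symm (q.succ, σ)).SameCycle y.succ j))
      = (Finset.univ.filter (fun j => σ.SameCycle y j)).map (Fin.succEmb n) := by
  ext x
  refine Fin.cases ?_ (fun z => ?_) x
  · simp only [Finset.mem_filter, Finset.mem_univ, true_and, Finset.mem_map, Fin.coe_succEmb]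
    constructor
    · intro h
      exact absurd ((ds_sameCycle_zero_succ σ q).1 h.symm).symm hy
    · rintro ⟨z, hz, hzy⟩; exact absurd hzy (Fin.succ_ne_zero z)
  · simp only [Finset.mem_filter, Finset.mem_univ, true_and, Finset.mem_map, Fin.coe_succEmb]
    constructor
    · intro h; exact ⟨z, (ds_sameCycle_succ σ q).1 h, rfl⟩
    · rintro ⟨w, hw, hwz⟩
      obtain rfl : w = z := by simpa [Fin.succ_inj] using hwz
      exact (ds_sameCycle_succ σ q).2 hw

lemma frob_cons_succ (f : A → B) :
    frobTerm f (Fin.cons b a) (Equiv.Perm.decomposeFin.symm (q.succ, σ))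
      = frobTerm f (Function.update a q (a q * b)) σ := by
  classical
  set Cq := Finset.univ.filter (fun j => σ.SameCycle q j) with hCq
  have hqCq : q ∈ Cq := by simp [hCq]; exact Equiv.Perm.SameCycle.refl _ _
  set i₀ := Cq.min' ⟨q, hqCq⟩ with hi₀
  have hi₀Cq : i₀ ∈ Cq := Finset.min'_mem _ _
  have hsc_qi₀ : σ.SameCycle q i₀ := by simpa [hCq] using hi₀Cq
  -- the cycle of i₀ is Cq
  have hcyc_i₀ : Finset.univ.filter (fun j => σ.SameCycle i₀ j) = Cq := by
    ext z
    simp only [Finset.mem_filter, Finset.mem_univ, true_and, hCq]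
    exact ⟨fun h => hsc_qi₀.trans h, fun h => hsc_qi₀.symm.trans h⟩
  -- decomposition of the min-reps of σ
  have hfset : Finset.univ.filter (fun i => ∀ j, σ.SameCycle i j → i ≤ j)
      = insert i₀ (Finset.univ.filter
          (fun i => (∀ j, σ.SameCycle i j → i ≤ j) ∧ ¬ σ.SameCycle i q)) := by
    ext x
    simp only [Finset.mem_filter, Finset.mem_univ, true_and, Finset.mem_insert]
    constructor
    · intro h
      by_cases hx : σ.SameCycle x q
      · left
        refine le_antisymm (h i₀ (hx.trans hsc_qi₀)) (Finset.min'_le _ _ ?_)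
        simpa [hCq] using hx.symm
      · exact Or.inr ⟨h, hx⟩
    · rintro (rfl | h)
      · intro j hj
        exact Finset.min'_le _ _ (by simpa [hCq] using hsc_qi₀.trans hj)
      · exact h.1
  have hi₀notT : i₀ ∉ Finset.univ.filter
      (fun i => (∀ j, σ.SameCycle i j → i ≤ j) ∧ ¬ σ.SameCycle i q) := by
    simp only [Finset.mem_filter, Finset.mem_univ, true_and, not_and, not_not]
    exact fun _ => hsc_qi₀.symm
  rw [frobTerm, frobTerm, ds_fset, hfset,
    Finset.prod_insert (by simp [Fin.succ_ne_zero]), Finset.prod_insert hi₀notT,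
    ds_cyc_zero, hcyc_i₀]
  congr 1
  · -- the cycle through 0 / i₀
    congr 1
    rw [Finset.prod_insert (by simp [Fin.succ_ne_zero]), Finset.prod_map,
      Finset.prod_update_of_mem hqCq, Finset.sdiff_singleton_eq_erase]
    simp only [Fin.cons_zero, Fin.coe_succEmb, Fin.cons_succ]
    rw [← hCq, ← Finset.mul_prod_erase Cq a hqCq]
    ring
  · rw [Finset.prod_map]
    refine Finset.prod_congr rfl (fun y hy => ?_)
    simp only [Finset.mem_filter, Finset.mem_univ, true_and] at hy
    rw [Fin.coe_succEmb, ds_cyc_succ σ q y (fun h => hy.2 (h.trans (Equiv.Perm.SameCycle.refl _ _)) ), Finset.prod_map]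
    have hqny : q ∉ Finset.univ.filter (fun j => σ.SameCycle y j) := by
      simp only [Finset.mem_filter, Finset.mem_univ, true_and]
      exact hy.2
    congr 1
    refine Finset.prod_congr rfl (fun z hz => ?_)
    rw [Fin.coe_succEmb, Fin.cons_succ, Function.update_of_ne]
    rintro rfl
    exact hqny hz

lemma phi_cons (f : A → B) {n : ℕ} (b : A) (a : Fin n → A) :
    PhiPerm f (Fin.cons b a) = f b * PhiPerm f a
      - ∑ q : Fin n, PhiPerm f (Function.update a q (a q * b)) := by
  classical
  have hre : PhiPerm f (Fin.cons b a)
      = ∑ x : Fin (n+1) × Equiv.Perm (Fin n),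
          (Equiv.Perm.sign (Equiv.Perm.decomposeFin.symm x) : ℤ)
            • frobTerm f (Fin.cons b a) (Equiv.Perm.decomposeFin.symm x) := by
    rw [PhiPerm]
    exact (Equiv.sum_comp (Equiv.Perm.decomposeFin).symm
      (fun π => (Equiv.Perm.sign π : ℤ) • frobTerm f (Fin.cons b a) π)).symm
  rw [hre, Fintype.sum_prod_type, Fin.sum_univ_succ]
  have h0 : ∑ σ : Equiv.Perm (Fin n),
      (Equiv.Perm.sign (Equiv.Perm.decomposeFin.symm ((0 : Fin (n+1)), σ)) : ℤ)
        • frobTerm f (Fin.cons b a) (Equiv.Perm.decomposeFin.symm (0, σ))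
      = f b * PhiPerm f a := by
    rw [PhiPerm, Finset.mul_sum]
    refine Finset.sum_congr rfl (fun σ _ => ?_)
    rw [Equiv.Perm.decomposeFin.symm_sign, frob_cons_zero]
    simp only [if_pos rfl, one_mul, zsmul_eq_mul]
    push_cast
    ring
  have hs : ∀ q : Fin n, ∑ σ : Equiv.Perm (Fin n),
      (Equiv.Perm.sign (Equiv.Perm.decomposeFin.symm (q.succ, σ)) : ℤ)
        • frobTerm f (Fin.cons b a) (Equiv.Perm.decomposeFin.symm (q.succ, σ))
      = - PhiPerm f (Function.update a q (a q * b)) := by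
    intro q
    rw [PhiPerm, ← Finset.sum_neg_distrib]
    refine Finset.sum_congr rfl (fun σ _ => ?_)
    rw [Equiv.Perm.decomposeFin.symm_sign, frob_cons_succ]
    simp only [Fin.succ_ne_zero, if_false, ite_false, zsmul_eq_mul]
    push_cast
    ring
  rw [h0, Finset.sum_congr rfl (fun q _ => hs q), Finset.sum_neg_distrib]
  ring

lemma phi_vanish (f : A → B) (m : ℕ) (hf : ∀ a : Fin (m + 1) → A, PhiPerm f a = 0) :
    ∀ N, m + 1 ≤ N → ∀ a : Fin N → A, PhiPerm f a = 0 := by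
  intro N
  induction N with
  | zero => omega
  | succ N ih =>
      intro hN a
      rcases Nat.lt_or_ge (m + 1) (N + 1) with h | h
      · have hN' : m + 1 ≤ N := by omega
        rw [← Fin.cons_self_tail a, phi_cons, ih hN' _]
        simp only [mul_zero, zero_sub, neg_eq_zero]
        exact Finset.sum_eq_zero (fun q _ => ih hN' _)
      · obtain rfl : m = N := by omega
        exact hf a

end consrec

section decomp

variable {N : ℕ}

lemma phi_cast (f : A → B) {M N : ℕ} (h : M = N) (a : Fin N → A) :
    PhiPerm f (fun i : Fin M => a (Fin.cast h i)) = PhiPerm f a := by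
  subst h; rfl

lemma phi_zero (f : A → B) (a : Fin 0 → A) : PhiPerm f a = 1 := by
  rw [PhiPerm, Finset.univ_unique, Finset.sum_singleton]
  have h1 : (default : Equiv.Perm (Fin 0)) = 1 := Subsingleton.elim _ _
  rw [h1, frobTerm]
  simp

/-- restriction of a tuple to a finset, via the order embedding. -/
def restr (a : Fin N → A) (S : Finset (Fin N)) : Fin S.card → A :=
  fun i => a (S.orderEmbOfFin rfl i)

lemma sum_emb (S : Finset (Fin N)) (F : Fin N → B) :
    ∑ i : Fin S.card, F (S.orderEmbOfFin rfl i) = ∑ q ∈ S, F q := by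
  refine Finset.sum_bij (fun i _ => S.orderEmbOfFin rfl i) (fun i _ => S.orderEmbOfFin_mem rfl i)
    (fun i _ j _ h => (S.orderEmbOfFin rfl).injective h) (fun q hq => ?_) (fun i _ => rfl)
  have hq' : q ∈ Set.range (S.orderEmbOfFin rfl) := by rw [S.range_orderEmbOfFin rfl]; exact hq
  obtain ⟨i, hi⟩ := hq'
  exact ⟨i, Finset.mem_univ i, hi⟩

lemma card_map_succ (S : Finset (Fin N)) : (S.map (Fin.succEmb N)).card = S.card :=
  Finset.card_map _

lemma card_insert_zero (S : Finset (Fin N)) :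
    (insert (0 : Fin (N+1)) (S.map (Fin.succEmb N))).card = S.card + 1 := by
  rw [Finset.card_insert_of_notMem (by simp [Fin.succ_ne_zero]), Finset.card_map]

lemma orderEmb_map_succ (S : Finset (Fin N)) (j : Fin (S.map (Fin.succEmb N)).card) :
    (S.map (Fin.succEmb N)).orderEmbOfFin rfl j
      = (S.orderEmbOfFin rfl (Fin.cast (card_map_succ S) j)).succ := by
  have hmem : ∀ x : Fin (S.map (Fin.succEmb N)).card,
      (S.orderEmbOfFin rfl (Fin.cast (card_map_succ S) x)).succ ∈ S.map (Fin.succEmb N) := by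
    intro x
    simp only [Finset.mem_map, Fin.coe_succEmb]
    exact ⟨_, S.orderEmbOfFin_mem rfl _, rfl⟩
  have hmono : StrictMono (fun x : Fin (S.map (Fin.succEmb N)).card =>
      (S.orderEmbOfFin rfl (Fin.cast (card_map_succ S) x)).succ) := by
    intro i j hij
    exact Fin.succ_lt_succ_iff.2 ((S.orderEmbOfFin rfl).strictMono hij)
  exact (congrFun (Finset.orderEmbOfFin_unique rfl hmem hmono) j).symm

lemma orderEmb_insert_zero (S : Finset (Fin N))
    (j : Fin (insert (0 : Fin (N+1)) (S.map (Fin.succEmb N))).card) :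
    (insert (0 : Fin (N+1)) (S.map (Fin.succEmb N))).orderEmbOfFin rfl j
      = Fin.cons (α := fun _ => Fin (N+1)) 0 (fun i => (S.orderEmbOfFin rfl i).succ)
          (Fin.cast (card_insert_zero S) j) := by
  have hmem : ∀ x, Fin.cons (α := fun _ => Fin (N+1)) 0 (fun i => (S.orderEmbOfFin rfl i).succ)
      (Fin.cast (card_insert_zero S) x) ∈ insert (0 : Fin (N+1)) (S.map (Fin.succEmb N)) := by
    intro x
    refine Fin.cases ?_ (fun i => ?_) (Fin.cast (card_insert_zero S) x)
    · simp
    · rw [Fin.cons_succ]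
      simp only [Finset.mem_insert, Finset.mem_map, Fin.coe_succEmb]
      exact Or.inr ⟨_, S.orderEmbOfFin_mem rfl _, rfl⟩
  have key : ∀ (i' j' : Fin (S.card + 1)), i' < j' →
      Fin.cons (α := fun _ => Fin (N+1)) 0 (fun i => (S.orderEmbOfFin rfl i).succ) i'
        < Fin.cons (α := fun _ => Fin (N+1)) 0 (fun i => (S.orderEmbOfFin rfl i).succ) j' := by
    intro i' j'
    refine Fin.cases ?_ (fun y => ?_) j' <;> refine Fin.cases ?_ (fun x => ?_) i' <;> intro h
    · exact absurd h (lt_irrefl _)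
    · exact absurd h (Fin.not_lt_zero _)
    · simp only [Fin.cons_zero, Fin.cons_succ]
      exact Fin.succ_pos _
    · simp only [Fin.cons_succ]
      exact Fin.succ_lt_succ_iff.2
        ((S.orderEmbOfFin rfl).strictMono (Fin.succ_lt_succ_iff.1 h))
  have hmono : StrictMono (fun x => Fin.cons (α := fun _ => Fin (N+1)) 0
      (fun i => (S.orderEmbOfFin rfl i).succ) (Fin.cast (card_insert_zero S) x)) :=
    fun i j hij => key _ _ hij
  exact (congrFun (Finset.orderEmbOfFin_unique rfl hmem hmono) j).symm

lemma compl_map_succ (S : Finset (Fin N)) :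
    (S.map (Fin.succEmb N))ᶜ = insert (0 : Fin (N+1)) (Sᶜ.map (Fin.succEmb N)) := by
  ext x
  refine Fin.cases ?_ (fun y => ?_) x <;>
    simp [Fin.succ_ne_zero, Fin.succ_inj, eq_comm (a := (0 : Fin (N+1)))]

lemma compl_insert_zero (S : Finset (Fin N)) :
    (insert (0 : Fin (N+1)) (S.map (Fin.succEmb N)))ᶜ = Sᶜ.map (Fin.succEmb N) := by
  ext x
  refine Fin.cases ?_ (fun y => ?_) x <;>
    simp [Fin.succ_ne_zero, Fin.succ_inj, eq_comm (a := (0 : Fin (N+1)))]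

end decomp

section decomp2

variable {N : ℕ} (b : A) (a : Fin N → A) (f : A → B)

lemma phi_restr_map_succ (S : Finset (Fin N)) :
    PhiPerm f (restr (Fin.cons b a) (S.map (Fin.succEmb N))) = PhiPerm f (restr a S) := by
  have h : restr (Fin.cons b a) (S.map (Fin.succEmb N))
      = fun j => restr a S (Fin.cast (card_map_succ S) j) := by
    funext j
    rw [restr, restr, orderEmb_map_succ, Fin.cons_succ]
  rw [h, phi_cast]

lemma phi_restr_insert_zero (S : Finset (Fin N)) :
    PhiPerm f (restr (Fin.cons b a) (insert (0 : Fin (N+1)) (S.map (Fin.succEmb N))))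
      = PhiPerm f (Fin.cons b (restr a S)) := by
  have h : restr (Fin.cons b a) (insert (0 : Fin (N+1)) (S.map (Fin.succEmb N)))
      = fun j => Fin.cons (α := fun _ => A) b (restr a S) (Fin.cast (card_insert_zero S) j) := by
    funext j
    rw [restr, orderEmb_insert_zero]
    refine Fin.cases ?_ (fun i => ?_) (Fin.cast (card_insert_zero S) j)
    · rw [Fin.cons_zero, Fin.cons_zero, Fin.cons_zero]
    · rw [Fin.cons_succ, Fin.cons_succ, Fin.cons_succ]
      rfl
  rw [h, phi_cast]

lemma restr_update_not_mem (S : Finset (Fin N)) {q : Fin N} (hq : q ∉ S) (x : A) :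
    restr (Function.update a q x) S = restr a S := by
  funext i
  rw [restr, restr, Function.update_of_ne]
  rintro rfl
  exact hq (S.orderEmbOfFin_mem rfl i)

lemma restr_update_emb (S : Finset (Fin N)) (i : Fin S.card) (x : A) :
    restr (Function.update a (S.orderEmbOfFin rfl i) x) S
      = Function.update (restr a S) i x := by
  funext j
  by_cases h : j = i
  · subst h
    rw [restr, Function.update_self, Function.update_self]
  · rw [restr, Function.update_of_ne (fun hc => h ((S.orderEmbOfFin rfl).injective hc)),
      Function.update_of_ne h, restr]

end decomp2

/-- subsets of `Fin (N+1)` are pairs (subset of `Fin N`, contains-0 flag). -/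
def finsetSuccEquiv (N : ℕ) : Finset (Fin N) × Bool ≃ Finset (Fin (N + 1)) where
  toFun x := cond x.2 (insert 0 (x.1.map (Fin.succEmb N))) (x.1.map (Fin.succEmb N))
  invFun S := (Finset.univ.filter (fun j : Fin N => j.succ ∈ S), (0 : Fin (N+1)) ∈ S)
  left_inv := by
    rintro ⟨S', t⟩
    cases t <;>
      · simp only [cond_true, cond_false]
        refine Prod.ext ?_ (by simp [Fin.succ_ne_zero])
        ext j
        simp [Fin.succ_ne_zero, Fin.succ_inj]
  right_inv := by
    intro S
    by_cases h0 : (0 : Fin (N+1)) ∈ S <;>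
      · simp only [h0, decide_true, decide_false, cond_true, cond_false]
        ext x
        refine Fin.cases ?_ (fun y => ?_) x <;>
          simp [h0, Fin.succ_ne_zero, Fin.succ_inj, eq_comm (a := (0 : Fin (N+1)))]

lemma finsetSuccEquiv_true (N : ℕ) (S' : Finset (Fin N)) :
    finsetSuccEquiv N (S', true) = insert 0 (S'.map (Fin.succEmb N)) := rfl

lemma finsetSuccEquiv_false (N : ℕ) (S' : Finset (Fin N)) :
    finsetSuccEquiv N (S', false) = S'.map (Fin.succEmb N) := rfl

lemma phi_add_decomp (f g : A → B) : ∀ {N : ℕ} (a : Fin N → A),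
    PhiPerm (fun x => f x + g x) a
      = ∑ S : Finset (Fin N), PhiPerm f (restr a S) * PhiPerm g (restr a Sᶜ) := by
  intro N
  induction N with
  | zero =>
      intro a
      rw [phi_zero, Finset.univ_unique, Finset.sum_singleton]
      have hz : ∀ (F : A → B) {M : ℕ} (c : Fin M → A), M = 0 → PhiPerm F c = 1 := by
        intro F M c hM; subst hM; exact phi_zero F c
      rw [hz f _ (Nat.le_zero.1 ((Finset.card_le_univ _).trans (by simp))),
        hz g _ (Nat.le_zero.1 ((Finset.card_le_univ _).trans (by simp))), one_mul]
  | succ N ih =>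
      intro a
      rw [← Fin.cons_self_tail a]
      set b := a 0 with hb
      set t := Fin.tail a with ht
      set u := fun q => Function.update t q (t q * b) with hu
      -- the common form
      set F := fun S' : Finset (Fin N) => PhiPerm f (restr t S') with hF
      set G := fun S' : Finset (Fin N) => PhiPerm g (restr t S'ᶜ) with hG
      have hLHS : PhiPerm (fun x => f x + g x) (Fin.cons b t)
          = (f b + g b) * ∑ S' : Finset (Fin N), F S' * G S'
            - ∑ S' : Finset (Fin N),
                ((∑ q ∈ S', PhiPerm f (restr (u q) S') * G S')
                  + ∑ q ∈ S'ᶜ, F S' * PhiPerm g (restr (u q) S'ᶜ)) := by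
        rw [phi_cons, ih t]
        have hsum : ∑ q : Fin N, PhiPerm (fun x => f x + g x) (u q)
            = ∑ S' : Finset (Fin N),
                ((∑ q ∈ S', PhiPerm f (restr (u q) S') * G S')
                  + ∑ q ∈ S'ᶜ, F S' * PhiPerm g (restr (u q) S'ᶜ)) := by
          rw [Finset.sum_congr rfl (fun q _ => ih (u q)), Finset.sum_comm]
          refine Finset.sum_congr rfl (fun S' _ => ?_)
          rw [← Finset.sum_add_sum_compl S'
            (fun q => PhiPerm f (restr (u q) S') * PhiPerm g (restr (u q) S'ᶜ))]
          congr 1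
          · refine Finset.sum_congr rfl (fun q hq => ?_)
            rw [hu]
            rw [restr_update_not_mem t S'ᶜ (by simp [hq]) _]
          · refine Finset.sum_congr rfl (fun q hq => ?_)
            rw [hu]
            rw [restr_update_not_mem t S' (by simpa using hq) _]
        rw [hsum]
      have hter : ∀ S' : Finset (Fin N),
          (PhiPerm f (restr (Fin.cons b t) (finsetSuccEquiv N (S', true)))
              * PhiPerm g (restr (Fin.cons b t) ((finsetSuccEquiv N (S', true)))ᶜ))
          + (PhiPerm f (restr (Fin.cons b t) (finsetSuccEquiv N (S', false)))
              * PhiPerm g (restr (Fin.cons b t) ((finsetSuccEquiv N (S', false)))ᶜ))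
          = (f b + g b) * (F S' * G S')
            - ((∑ q ∈ S', PhiPerm f (restr (u q) S')) * G S'
                + F S' * (∑ q ∈ S'ᶜ, PhiPerm g (restr (u q) S'ᶜ))) := by
        intro S'
        rw [finsetSuccEquiv_true, finsetSuccEquiv_false, compl_insert_zero, compl_map_succ,
          phi_restr_insert_zero, phi_restr_map_succ, phi_restr_map_succ, phi_restr_insert_zero,
          phi_cons f b (restr t S'), phi_cons g b (restr t S'ᶜ)]
        have h1 : ∑ i : Fin S'.card,
            PhiPerm f (Function.update (restr t S') i (restr t S' i * b))
            = ∑ q ∈ S', PhiPerm f (restr (u q) S') := by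
          rw [← sum_emb S' (fun q => PhiPerm f (restr (u q) S'))]
          refine Finset.sum_congr rfl (fun i _ => ?_)
          rw [hu, restr_update_emb t S' i (t (S'.orderEmbOfFin rfl i) * b)]
          rfl
        have h2 : ∑ i : Fin S'ᶜ.card,
            PhiPerm g (Function.update (restr t S'ᶜ) i (restr t S'ᶜ i * b))
            = ∑ q ∈ S'ᶜ, PhiPerm g (restr (u q) S'ᶜ) := by
          rw [← sum_emb S'ᶜ (fun q => PhiPerm g (restr (u q) S'ᶜ))]
          refine Finset.sum_congr rfl (fun i _ => ?_)
          rw [hu, restr_update_emb t S'ᶜ i (t (S'ᶜ.orderEmbOfFin rfl i) * b)]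
          rfl
        rw [h1, h2]
        simp only [hF, hG]
        ring
      have hRHS : ∑ S : Finset (Fin (N+1)),
            PhiPerm f (restr (Fin.cons b t) S) * PhiPerm g (restr (Fin.cons b t) Sᶜ)
          = (f b + g b) * ∑ S' : Finset (Fin N), F S' * G S'
            - ∑ S' : Finset (Fin N),
                ((∑ q ∈ S', PhiPerm f (restr (u q) S') * G S')
                  + ∑ q ∈ S'ᶜ, F S' * PhiPerm g (restr (u q) S'ᶜ)) := by
        rw [← Equiv.sum_comp (finsetSuccEquiv N)
          (fun S => PhiPerm f (restr (Fin.cons b t) S) * PhiPerm g (restr (Fin.cons b t) Sᶜ)),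
          Fintype.sum_prod_type]
        have : ∀ S' : Finset (Fin N), ∑ tb : Bool,
            PhiPerm f (restr (Fin.cons b t) (finsetSuccEquiv N (S', tb)))
              * PhiPerm g (restr (Fin.cons b t) ((finsetSuccEquiv N (S', tb)))ᶜ)
            = (f b + g b) * (F S' * G S')
              - ((∑ q ∈ S', PhiPerm f (restr (u q) S')) * G S'
                  + F S' * (∑ q ∈ S'ᶜ, PhiPerm g (restr (u q) S'ᶜ))) := by
          intro S'
          rw [Fintype.sum_bool]
          exact hter S'
        rw [Finset.sum_congr rfl (fun S' _ => this S'), Finset.sum_sub_distrib, ← Finset.mul_sum]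
        congr 1
        refine Finset.sum_congr rfl (fun S' _ => ?_)
        rw [Finset.sum_mul, Finset.mul_sum]
      rw [hLHS, hRHS]


/-- The sum of a Frobenius `m`-homomorphism and a Frobenius `n`-homomorphism is a
Frobenius `(m+n)`-homomorphism. -/
theorem isFrobeniusHom_add {k : Type*} [Field k] [CharZero k]
    [Algebra k A] [Algebra k B] (f g : A →ₗ[k] B) (m n : ℕ)
    (hf : IsFrobeniusHom (f : A → B) m) (hg : IsFrobeniusHom (g : A → B) n) :
    IsFrobeniusHom ((f + g : A →ₗ[k] B) : A → B) (m + n) := by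
  constructor
  · intro a
    have hco : ((f + g : A →ₗ[k] B) : A → B) = fun x => f x + g x := by
      funext x; simp
    rw [hco, phi_add_decomp]
    refine Finset.sum_eq_zero (fun S _ => ?_)
    have hcard : S.card + Sᶜ.card = m + n + 1 := by
      rw [Finset.card_add_card_compl, Fintype.card_fin]
    rcases Nat.lt_or_ge S.card (m + 1) with h | h
    · have hc : n + 1 ≤ Sᶜ.card := by omega
      rw [phi_vanish (g : A → B) n hg.1 Sᶜ.card hc (restr a Sᶜ), mul_zero]
    · rw [phi_vanish (f : A → B) m hf.1 S.card h (restr a S), zero_mul]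
  · have h1 : ((f + g : A →ₗ[k] B) : A → B) 1 = f 1 + g 1 := by simp
    rw [h1, hf.2, hg.2]
    push_cast
    ring
end

section
/- If f : A → B is a sum of n ring homomorphisms f₁, …, f_n : A → B between commutative algebras over a field of characteristic zero, then f is a Frobenius n-homomorphism: Φ_{n+1}(f) ≡ 0 and f(1) = n. -/
open Finset

variable {A B : Type*} [CommRing A] [CommRing B]
namespace FrobAux

variable {m n : ℕ}

/-- The cycle of `i` under `σ`, as a finset. -/
def cyc (σ : Equiv.Perm (Fin m)) (i : Fin m) : Finset (Fin m) :=
  Finset.univ.filter (fun j => σ.SameCycle i j)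

/-- Minimal representatives of cycles. -/
def reps (σ : Equiv.Perm (Fin m)) : Finset (Fin m) :=
  Finset.univ.filter (fun i => ∀ j, σ.SameCycle i j → i ≤ j)

lemma mem_cyc {σ : Equiv.Perm (Fin m)} {i j : Fin m} : j ∈ cyc σ i ↔ σ.SameCycle i j := by
  simp [cyc]

lemma mem_reps {σ : Equiv.Perm (Fin m)} {i : Fin m} :
    i ∈ reps σ ↔ ∀ j, σ.SameCycle i j → i ≤ j := by simp [reps]

lemma cyc_nonempty (σ : Equiv.Perm (Fin m)) (j : Fin m) : (cyc σ j).Nonempty :=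
  ⟨j, mem_cyc.2 (Equiv.Perm.SameCycle.refl _ _)⟩

/-- The minimal element of the cycle of `j`. -/
def rep (σ : Equiv.Perm (Fin m)) (j : Fin m) : Fin m :=
  (cyc σ j).min' (cyc_nonempty σ j)

lemma sameCycle_rep (σ : Equiv.Perm (Fin m)) (j : Fin m) : σ.SameCycle j (rep σ j) :=
  mem_cyc.1 ((cyc σ j).min'_mem _)

lemma rep_mem_reps (σ : Equiv.Perm (Fin m)) (j : Fin m) : rep σ j ∈ reps σ := by
  rw [mem_reps]
  intro x hx
  exact (cyc σ j).min'_le x (mem_cyc.2 ((sameCycle_rep σ j).trans hx))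

lemma rep_eq_of_mem_reps {σ : Equiv.Perm (Fin m)} {i j : Fin m}
    (hi : i ∈ reps σ) (h : σ.SameCycle i j) : rep σ j = i :=
  le_antisymm ((cyc σ j).min'_le i (mem_cyc.2 h.symm))
    (mem_reps.1 hi _ (h.trans (sameCycle_rep σ j)))

lemma rep_apply (σ : Equiv.Perm (Fin m)) (j : Fin m) : rep σ (σ j) = rep σ j :=
  rep_eq_of_mem_reps (rep_mem_reps σ j)
    ((sameCycle_rep σ j).symm.trans ⟨1, by simp⟩)

lemma comp_eq_const {σ : Equiv.Perm (Fin m)} {φ : Fin m → Fin n} (hφ : φ ∘ σ = φ)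
    {x y : Fin m} (h : σ.SameCycle x y) : φ x = φ y := by
  have key : ∀ (i : ℕ) (z : Fin m), φ ((σ ^ i) z) = φ z := by
    intro i
    induction i with
    | zero => simp
    | succ i ih =>
      intro z
      rw [pow_succ, Equiv.Perm.mul_apply, ih (σ z)]
      exact congrFun hφ z
  obtain ⟨i, -, -, hi⟩ := h.exists_pow_eq''
  rw [← hi, key i x]

/-- Expansion of `frobTerm` for a sum of ring homomorphisms. -/
lemma frobTerm_eq_sum (f : A → B) (g : Fin n → (A →+* B))
    (hf : ∀ a : A, f a = ∑ i, g i a) (a : Fin m → A) (σ : Equiv.Perm (Fin m)) :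
    frobTerm f a σ =
      ∑ φ ∈ Finset.univ.filter (fun φ : Fin m → Fin n => φ ∘ σ = φ),
        ∏ j, g (φ j) (a j) := by
  classical
  have step1 : frobTerm f a σ = ∑ q : {x // x ∈ reps σ} → Fin n,
      ∏ i : {x // x ∈ reps σ}, ∏ j ∈ cyc σ i.1, g (q i) (a j) := by
    rw [frobTerm, show Finset.univ.filter (fun i => ∀ j, σ.SameCycle i j → i ≤ j) = reps σ
      from rfl, ← Finset.prod_coe_sort]
    have h1 : ∀ i : {x // x ∈ reps σ},
        f (∏ j ∈ Finset.univ.filter (fun j => σ.SameCycle i.1 j), a j)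
          = ∑ c : Fin n, ∏ j ∈ cyc σ i.1, g c (a j) := by
      intro i
      rw [hf]
      exact Finset.sum_congr rfl fun c _ => map_prod _ _ _
    rw [Finset.prod_congr rfl fun i _ => h1 i, Finset.prod_univ_sum]
    rw [Fintype.piFinset_univ]
  have hdisj : (↑(reps σ) : Set (Fin m)).PairwiseDisjoint (cyc σ) := by
    intro x hx y hy hxy
    refine Finset.disjoint_left.2 fun z hzx hzy => hxy ?_
    have hxy' : σ.SameCycle x y := (mem_cyc.1 hzx).trans (mem_cyc.1 hzy).symm
    exact le_antisymm (mem_reps.1 hx _ hxy') (mem_reps.1 hy _ hxy'.symm)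
  have hbiUnion : (reps σ).biUnion (cyc σ) = Finset.univ := by
    ext j
    simp only [Finset.mem_biUnion, Finset.mem_univ, iff_true]
    exact ⟨rep σ j, rep_mem_reps σ j, mem_cyc.2 (sameCycle_rep σ j).symm⟩
  have step2 : ∀ q : {x // x ∈ reps σ} → Fin n,
      ∏ i : {x // x ∈ reps σ}, ∏ j ∈ cyc σ i.1, g (q i) (a j)
        = ∏ j, g (q ⟨rep σ j, rep_mem_reps σ j⟩) (a j) := by
    intro q
    have h2 : ∀ i : {x // x ∈ reps σ}, ∏ j ∈ cyc σ i.1, g (q i) (a j)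
        = ∏ j ∈ cyc σ i.1, g (q ⟨rep σ j, rep_mem_reps σ j⟩) (a j) := by
      intro i
      refine Finset.prod_congr rfl fun j hj => ?_
      have hr : rep σ j = i.1 := rep_eq_of_mem_reps i.2 (mem_cyc.1 hj)
      have : (⟨rep σ j, rep_mem_reps σ j⟩ : {x // x ∈ reps σ}) = i := Subtype.ext hr
      rw [this]
    rw [Finset.prod_congr rfl fun i _ => h2 i,
      Finset.prod_coe_sort (s := reps σ)
        (f := fun i => ∏ j ∈ cyc σ i, g (q ⟨rep σ j, rep_mem_reps σ j⟩) (a j)),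
      ← Finset.prod_biUnion hdisj, hbiUnion]
  rw [step1, Finset.sum_congr rfl fun q _ => step2 q]
  refine Finset.sum_nbij' (fun q => fun j => q ⟨rep σ j, rep_mem_reps σ j⟩)
    (fun φ => fun i => φ i.1) ?_ ?_ ?_ ?_ ?_
  · intro q _
    simp only [Finset.mem_filter, Finset.mem_univ, true_and]
    funext z
    simp only [Function.comp_apply]
    exact congrArg q (Subtype.ext (rep_apply σ z))
  · intro φ _
    exact Finset.mem_univ _
  · intro q _
    funext i
    exact congrArg q (Subtype.ext (rep_eq_of_mem_reps i.2 (Equiv.Perm.SameCycle.refl _ _)))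
  · intro φ hφ
    simp only [Finset.mem_filter, Finset.mem_univ, true_and] at hφ
    funext z
    exact comp_eq_const hφ (sameCycle_rep σ z).symm
  · intro q _
    rfl

lemma sign_sum_zero (φ : Fin (n + 1) → Fin n) :
    ∑ σ ∈ Finset.univ.filter (fun σ : Equiv.Perm (Fin (n + 1)) => φ ∘ σ = φ),
      ((Equiv.Perm.sign σ : ℤˣ) : ℤ) = 0 := by
  obtain ⟨x, y, hxy, hφ⟩ := Fintype.exists_ne_map_eq_of_card_lt φ (by simp)
  have hswap : φ ∘ (Equiv.swap x y) = φ := by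
    funext z
    simp only [Function.comp_apply]
    rcases eq_or_ne z x with rfl | hzx
    · rw [Equiv.swap_apply_left]; exact hφ.symm
    rcases eq_or_ne z y with rfl | hzy
    · rw [Equiv.swap_apply_right]; exact hφ
    · rw [Equiv.swap_apply_of_ne_of_ne hzx hzy]
  refine Finset.sum_involution (fun σ _ => σ * Equiv.swap x y) ?_ ?_ ?_ ?_
  · intro σ _
    simp [Equiv.Perm.sign_mul, Equiv.Perm.sign_swap hxy]
  · intro σ _ _ heq
    exact hxy (Equiv.swap_eq_one_iff.1 (mul_left_cancel (heq.trans (mul_one σ).symm)))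
  · intro σ hσ
    simp only [Finset.mem_filter, Finset.mem_univ, true_and] at hσ ⊢
    calc φ ∘ ⇑(σ * Equiv.swap x y) = (φ ∘ ⇑σ) ∘ ⇑(Equiv.swap x y) := rfl
      _ = φ ∘ ⇑(Equiv.swap x y) := by rw [hσ]
      _ = φ := hswap
  · intro σ _
    exact Equiv.mul_swap_mul_self x y σ

end FrobAux

/-- A sum of `n` ring homomorphisms is a Frobenius `n`-homomorphism. -/
theorem isFrobeniusHom_of_sum_ringHoms {k : Type*} [Field k] [CharZero k]
    [Algebra k A] [Algebra k B] (f : A →ₗ[k] B) (n : ℕ)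
    (g : Fin n → (A →+* B)) (hf : ∀ a : A, f a = ∑ i, g i a) :
    IsFrobeniusHom (f : A → B) n := by
  classical
  constructor
  · intro a
    rw [PhiPerm]
    have h1 : ∀ σ : Equiv.Perm (Fin (n + 1)),
        (Equiv.Perm.sign σ : ℤ) • frobTerm (⇑f) a σ
          = ∑ φ : Fin (n + 1) → Fin n,
              if φ ∘ σ = φ then (Equiv.Perm.sign σ : ℤ) • ∏ j, g (φ j) (a j) else 0 := by
      intro σ
      rw [FrobAux.frobTerm_eq_sum (⇑f) g hf a σ, Finset.smul_sum, Finset.sum_filter]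
    rw [Finset.sum_congr rfl fun σ _ => h1 σ, Finset.sum_comm]
    refine Finset.sum_eq_zero fun φ _ => ?_
    have h2 : ∑ σ : Equiv.Perm (Fin (n + 1)),
        (if φ ∘ σ = φ then (Equiv.Perm.sign σ : ℤ) • ∏ j, g (φ j) (a j) else 0)
          = (∑ σ ∈ Finset.univ.filter
              (fun σ : Equiv.Perm (Fin (n + 1)) => φ ∘ σ = φ),
                ((Equiv.Perm.sign σ : ℤˣ) : ℤ)) • ∏ j, g (φ j) (a j) := by
      rw [← Finset.sum_filter, Finset.sum_smul]
    rw [h2, FrobAux.sign_sum_zero φ, zero_smul]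
  · rw [hf]
    simp
end

section
/- For a linear map f : A → B between commutative algebras and any a ∈ A, Φ_n(f)(a, 1, 1, …, 1) = f(a)·(f(1)−1)(f(1)−2)⋯(f(1)−(n−1)). -/
open Finset

variable {A B : Type*} [CommRing A] [CommRing B]

lemma PhiL_cons (f : A → B) (a : A) (l : List A) :
    PhiL f (a :: l) = f a * PhiL f l -
      ∑ j ∈ Finset.range l.length, PhiL f (l.modify j (fun x => a * x)) := by
  rw [PhiL]

lemma modify_one_mul (l : List A) (j : ℕ) : l.modify j (fun x => 1 * x) = l := by
  induction l generalizing j with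
  | nil => simp
  | cons b l ih =>
    cases j with
    | zero => rw [List.modify_zero_cons]; simp
    | succ n => rw [List.modify_succ_cons, ih]

lemma modify_replicate (a : A) (m j : ℕ) (hj : j < m) :
    (List.replicate m (1 : A)).modify j (fun x => a * x)
      = List.replicate j 1 ++ a :: List.replicate (m - 1 - j) 1 := by
  induction m generalizing j with
  | zero => omega
  | succ m ih =>
    cases j with
    | zero => simp [List.replicate_succ, List.modify_zero_cons]
    | succ j =>
      rw [List.replicate_succ, List.modify_succ_cons, ih j (by omega)]
      simp [List.replicate_succ]
      omega

lemma PhiL_ones (f : A → B) (m : ℕ) :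
    PhiL f (List.replicate m (1 : A)) = ∏ j ∈ Finset.range m, (f 1 - (j : B)) := by
  induction m with
  | zero => simp [PhiL]
  | succ m ih =>
    rw [List.replicate_succ, PhiL_cons]
    simp only [modify_one_mul, List.length_replicate, Finset.sum_const, Finset.card_range,
      nsmul_eq_mul, ih, Finset.prod_range_succ]
    ring

lemma PhiL_key (f : A → B) :
    ∀ (N k m : ℕ) (a : A), k + m ≤ N →
    PhiL f (List.replicate k (1 : A) ++ a :: List.replicate m 1)
      = f a * ∏ j ∈ Finset.range (k + m), (f 1 - ((j : B) + 1)) := by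
  intro N
  induction N with
  | zero =>
    intro k m a h
    obtain ⟨rfl, rfl⟩ : k = 0 ∧ m = 0 := by omega
    simp [PhiL_cons, PhiL]
  | succ N ih =>
    intro k m a h
    cases k with
    | zero =>
      simp only [List.replicate, List.nil_append, Nat.zero_add]
      rw [PhiL_cons, PhiL_ones]
      simp only [List.length_replicate]
      have hsum : ∀ j ∈ Finset.range m,
          PhiL f ((List.replicate m (1:A)).modify j (fun x => a * x))
            = f a * ∏ i ∈ Finset.range (m - 1), (f 1 - ((i : B) + 1)) := by
        intro j hj
        rw [Finset.mem_range] at hj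
        have hN : j + (m - 1 - j) ≤ N := by omega
        rw [modify_replicate a m j hj, ih j (m - 1 - j) a hN]
        have : j + (m - 1 - j) = m - 1 := by omega
        rw [this]
      rw [Finset.sum_congr rfl hsum]
      simp only [List.length_replicate, Finset.sum_const, Finset.card_range, nsmul_eq_mul]
      cases m with
      | zero => simp
      | succ m =>
        rw [Finset.prod_range_succ' (fun j => (f 1 - (j : B)))]
        simp only [Nat.add_sub_cancel, Finset.prod_range_succ]
        push_cast
        ring
    | succ k =>
      rw [List.replicate_succ, List.cons_append, PhiL_cons]
      have hlen : (List.replicate k (1:A) ++ a :: List.replicate m 1).length = k + m + 1 := by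
        simp; omega
      simp only [modify_one_mul, hlen, Finset.sum_const, Finset.card_range, nsmul_eq_mul,
        ih k m a (by omega)]
      have : k + 1 + m = (k + m) + 1 := by omega
      rw [this, Finset.prod_range_succ]
      push_cast
      ring

/-- `Φ_{n+1}(f)(a,1,…,1) = f(a)(f(1)−1)(f(1)−2)⋯(f(1)−n)` (Lemma 2.15). -/
theorem phi_on_a_and_ones {F : Type*} [Field F]
    [Algebra F A] [Algebra F B] (f : A →ₗ[F] B) (n : ℕ) (a : A) :
    PhiL (f : A → B) (a :: List.replicate n 1) =
      f a * ∏ j ∈ Finset.range n, (f 1 - (j + 1 : B)) := by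
  have := PhiL_key (f : A → B) n 0 n a (by omega)
  simpa using this
end

section
/- Let X be a finite set and C(X) the algebra of complex-valued functions on X. A linear map f : C(X) → ℂ is a Frobenius n-homomorphism if and only if there exist points x₁, …, x_n ∈ X (with repetitions allowed) such that f(g) = g(x₁) + ⋯ + g(x_n) for all g ∈ C(X). Consequently the evaluation map Sym^n(X) → Hom(C(X), ℂ) is a bijection onto the set of Frobenius n-homomorphisms. -/
open Finset

variable {A B : Type*} [CommRing A] [CommRing B]
namespace Frob

variable {k : ℕ}

def Reps (σ : Equiv.Perm (Fin k)) : Finset (Fin k) :=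
  Finset.univ.filter (fun i => ∀ j, σ.SameCycle i j → i ≤ j)

def Cyc (σ : Equiv.Perm (Fin k)) (i : Fin k) : Finset (Fin k) :=
  Finset.univ.filter (fun j => σ.SameCycle i j)

lemma mem_Reps {σ : Equiv.Perm (Fin k)} {i : Fin k} :
    i ∈ Reps σ ↔ ∀ j, σ.SameCycle i j → i ≤ j := by simp [Reps]

lemma mem_Cyc {σ : Equiv.Perm (Fin k)} {i j : Fin k} :
    j ∈ Cyc σ i ↔ σ.SameCycle i j := by simp [Cyc]

lemma self_mem_Cyc {σ : Equiv.Perm (Fin k)} (i : Fin k) : i ∈ Cyc σ i :=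
  mem_Cyc.2 (Equiv.Perm.SameCycle.refl σ i)

lemma Cyc_congr {σ : Equiv.Perm (Fin k)} {i i' : Fin k} (h : σ.SameCycle i i') :
    Cyc σ i = Cyc σ i' := by
  ext j; simp only [mem_Cyc]
  exact ⟨fun hj => h.symm.trans hj, fun hj => h.trans hj⟩

lemma frobTerm_eq (f : A → B) (a : Fin k → A) (σ : Equiv.Perm (Fin k)) :
    frobTerm f a σ = ∏ i ∈ Reps σ, f (∏ j ∈ Cyc σ i, a j) := rfl

/-- The representative (minimum) of the cycle of `p`. -/
noncomputable def repOf (σ : Equiv.Perm (Fin k)) (p : Fin k) : Fin k :=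
  (Cyc σ p).min' ⟨p, self_mem_Cyc p⟩

lemma sameCycle_repOf (σ : Equiv.Perm (Fin k)) (p : Fin k) :
    σ.SameCycle (repOf σ p) p := by
  have : repOf σ p ∈ Cyc σ p := Finset.min'_mem _ _
  exact (mem_Cyc.1 this).symm

lemma repOf_mem_Reps (σ : Equiv.Perm (Fin k)) (p : Fin k) : repOf σ p ∈ Reps σ := by
  rw [mem_Reps]
  intro j hj
  have hj' : j ∈ Cyc σ p := mem_Cyc.2 ((sameCycle_repOf σ p).symm.trans hj).symm.symm
  · exact Finset.min'_le _ _ hj'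

lemma eq_repOf {σ : Equiv.Perm (Fin k)} {i p : Fin k} (hi : i ∈ Reps σ)
    (h : σ.SameCycle i p) : i = repOf σ p := by
  have h1 : i ≤ repOf σ p := (mem_Reps.1 hi) _ (h.trans (sameCycle_repOf σ p).symm)
  have h2 : repOf σ p ≤ i := (mem_Reps.1 (repOf_mem_Reps σ p)) _ ((sameCycle_repOf σ p).trans h.symm)
  exact le_antisymm h1 h2

lemma Cyc_repOf (σ : Equiv.Perm (Fin k)) (p : Fin k) : Cyc σ (repOf σ p) = Cyc σ p :=
  Cyc_congr (sameCycle_repOf σ p)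

lemma not_mem_Cyc_of_ne_repOf {σ : Equiv.Perm (Fin k)} {i p : Fin k} (hi : i ∈ Reps σ)
    (hne : i ≠ repOf σ p) : p ∉ Cyc σ i := by
  intro hp
  exact hne (eq_repOf hi (mem_Cyc.1 hp))

/-- Splitting off the factor containing slot `p`. -/
lemma frobTerm_split (f : A → B) (a : Fin k → A) (σ : Equiv.Perm (Fin k)) (p : Fin k) :
    frobTerm f a σ =
      f (∏ j ∈ Cyc σ p, a j) *
        ∏ i ∈ (Reps σ).erase (repOf σ p), f (∏ j ∈ Cyc σ i, a j) := by
  rw [frobTerm_eq, ← Finset.mul_prod_erase _ _ (repOf_mem_Reps σ p), Cyc_repOf]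

lemma frobTerm_update (f : A → B) (a : Fin k → A) (σ : Equiv.Perm (Fin k)) (p : Fin k)
    (v : A) :
    frobTerm f (Function.update a p v) σ =
      f (v * ∏ j ∈ (Cyc σ p).erase p, a j) *
        ∏ i ∈ (Reps σ).erase (repOf σ p), f (∏ j ∈ Cyc σ i, a j) := by
  rw [frobTerm_split f _ σ p]
  congr 1
  · congr 1
    rw [← Finset.mul_prod_erase _ _ (self_mem_Cyc p), Function.update_self]
    congr 1
    exact Finset.prod_congr rfl fun j hj => Function.update_of_ne (Finset.ne_of_mem_erase hj) _ _
  · refine Finset.prod_congr rfl fun i hi => ?_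
    congr 1
    refine Finset.prod_congr rfl fun j hj => ?_
    have hp : p ∉ Cyc σ i :=
      not_mem_Cyc_of_ne_repOf (Finset.mem_of_mem_erase hi) (Finset.ne_of_mem_erase hi)
    exact Function.update_of_ne (fun h => hp (by rwa [h] at hj)) _ _

lemma frobTerm_eq_zero (f : A → B) (hf0 : f 0 = 0) (a : Fin k → A) (σ : Equiv.Perm (Fin k))
    (p : Fin k) (hp : a p = 0) : frobTerm f a σ = 0 := by
  rw [frobTerm_split f a σ p, Finset.prod_eq_zero (self_mem_Cyc p) hp, hf0, zero_mul]

lemma PhiPerm_eq_zero_of (f : A → B) (hf0 : f 0 = 0) (a : Fin k → A) (p : Fin k)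
    (hp : a p = 0) : PhiPerm f a = 0 := by
  unfold PhiPerm
  refine Finset.sum_eq_zero fun σ _ => ?_
  rw [frobTerm_eq_zero f hf0 a σ p hp, smul_zero]

end Frob

open Equiv Equiv.Perm

variable {k : ℕ}

lemma sameCycle_of_pow {α : Type*} {τ : Perm α} {x y : α} (n : ℕ) (h : (τ ^ n) x = y) :
    τ.SameCycle x y := ⟨(n : ℤ), by simpa [zpow_natCast] using h⟩

lemma sameCycle_iff_pow {α : Type*} [Finite α] {τ : Perm α} {x y : α} :
    τ.SameCycle x y ↔ ∃ n : ℕ, (τ ^ n) x = y := by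
  constructor
  · intro h
    obtain ⟨i, _, hi⟩ := h.exists_pow_eq'
    exact ⟨i, hi⟩
  · rintro ⟨n, h⟩; exact sameCycle_of_pow n h

section CaseA
variable (σ : Perm (Fin k))

lemma tauA_zero : (Equiv.Perm.decomposeFin.symm (0, σ) : Perm (Fin (k+1))) 0 = 0 :=
  Equiv.Perm.decomposeFin_symm_apply_zero 0 σ

lemma tauA_succ (i : Fin k) :
    (Equiv.Perm.decomposeFin.symm (0, σ) : Perm (Fin (k+1))) i.succ = (σ i).succ := by
  rw [Equiv.Perm.decomposeFin_symm_apply_succ]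
  simp

lemma tauA_pow_zero (n : ℕ) :
    ((Equiv.Perm.decomposeFin.symm (0, σ) : Perm (Fin (k+1))) ^ n) 0 = 0 := by
  induction n with
  | zero => rfl
  | succ n ih => rw [pow_succ, Perm.mul_apply, tauA_zero, ih]

lemma tauA_pow_succ (n : ℕ) (i : Fin k) :
    ((Equiv.Perm.decomposeFin.symm (0, σ) : Perm (Fin (k+1))) ^ n) i.succ = ((σ ^ n) i).succ := by
  induction n with
  | zero => rfl
  | succ n ih => rw [pow_succ', pow_succ', Perm.mul_apply, Perm.mul_apply, ih, tauA_succ]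

lemma sameCycleA_zero {j : Fin (k+1)}
    (h : (Equiv.Perm.decomposeFin.symm (0, σ) : Perm (Fin (k+1))).SameCycle 0 j) : j = 0 := by
  obtain ⟨n, hn⟩ := sameCycle_iff_pow.1 h
  rw [tauA_pow_zero] at hn; exact hn.symm

lemma sameCycleA_succ {i j : Fin k} :
    (Equiv.Perm.decomposeFin.symm (0, σ) : Perm (Fin (k+1))).SameCycle i.succ j.succ ↔
      σ.SameCycle i j := by
  rw [sameCycle_iff_pow, sameCycle_iff_pow]
  constructor
  · rintro ⟨n, hn⟩
    rw [tauA_pow_succ] at hn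
    exact ⟨n, Fin.succ_injective _ hn⟩
  · rintro ⟨n, hn⟩
    exact ⟨n, by rw [tauA_pow_succ, hn]⟩

lemma not_sameCycleA_succ_zero (i : Fin k) :
    ¬ (Equiv.Perm.decomposeFin.symm (0, σ) : Perm (Fin (k+1))).SameCycle i.succ 0 := by
  intro h
  obtain ⟨n, hn⟩ := sameCycle_iff_pow.1 h
  rw [tauA_pow_succ] at hn
  exact Fin.succ_ne_zero _ hn

end CaseA

section CaseB
variable (σ : Perm (Fin k)) (q : Fin k)

local notation "τB" => (Equiv.Perm.decomposeFin.symm (q.succ, σ) : Perm (Fin (k+1)))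

lemma tauB_zero : τB 0 = q.succ := Equiv.Perm.decomposeFin_symm_apply_zero _ σ

lemma tauB_succ (i : Fin k) : τB i.succ = if σ i = q then 0 else (σ i).succ := by
  rw [Equiv.Perm.decomposeFin_symm_apply_succ]
  rcases eq_or_ne (σ i) q with h | h
  · rw [if_pos h, h, Equiv.swap_apply_right]
  · rw [if_neg h, Equiv.swap_apply_of_ne_of_ne (Fin.succ_ne_zero _)
      (fun hc => h (Fin.succ_injective _ hc))]

/-- the projection `Fin (k+1) → Fin k` sending `0 ↦ q`, `i.succ ↦ i`. -/
def piB (q : Fin k) : Fin (k+1) → Fin k := Fin.cases q (fun i => i)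

@[simp] lemma piB_zero : piB q 0 = q := rfl
@[simp] lemma piB_succ (i : Fin k) : piB q i.succ = i := rfl

lemma piB_step (z : Fin (k+1)) : σ.SameCycle (piB q (τB z)) (piB q z) := by
  induction z using Fin.cases with
  | zero =>
    rw [tauB_zero]; simp only [piB_succ, piB_zero]
    exact Equiv.Perm.SameCycle.refl _ _
  | succ i =>
    rw [tauB_succ]
    have h1 : σ.SameCycle (σ i) i :=
      Equiv.Perm.SameCycle.symm ⟨1, by simp⟩
    rcases eq_or_ne (σ i) q with h | h
    · rw [if_pos h]; simpa [← h] using h1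
    · rw [if_neg h]; simpa using h1

lemma piB_pow (n : ℕ) (z : Fin (k+1)) : σ.SameCycle (piB q ((τB ^ n) z)) (piB q z) := by
  induction n with
  | zero => exact Equiv.Perm.SameCycle.refl _ _
  | succ n ih => rw [pow_succ', Perm.mul_apply]; exact (piB_step σ q _).trans ih

lemma sameCycleB_proj {x y : Fin (k+1)} (h : (τB).SameCycle x y) :
    σ.SameCycle (piB q x) (piB q y) := by
  obtain ⟨n, hn⟩ := sameCycle_iff_pow.1 h
  rw [← hn]
  exact (piB_pow σ q n x).symm

lemma tauB_step_succ (i : Fin k) : (τB).SameCycle i.succ (σ i).succ := by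
  rcases eq_or_ne (σ i) q with h | h
  · refine sameCycle_of_pow 2 ?_
    rw [pow_two, Perm.mul_apply, tauB_succ, if_pos h, tauB_zero, h]
  · exact sameCycle_of_pow 1 (by rw [pow_one, tauB_succ, if_neg h])

lemma tauB_pow_succ (n : ℕ) : ∀ i : Fin k, (τB).SameCycle i.succ (((σ ^ n) i).succ) := by
  induction n with
  | zero => intro i; rw [pow_zero]; exact Equiv.Perm.SameCycle.refl _ _
  | succ n ih =>
    intro i
    rw [pow_succ', Perm.mul_apply]
    exact (ih i).trans (tauB_step_succ σ q _)

lemma sameCycleB_succ_succ {i j : Fin k} (h : σ.SameCycle i j) :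
    (τB).SameCycle i.succ j.succ := by
  obtain ⟨n, hn⟩ := sameCycle_iff_pow.1 h
  rw [← hn]
  exact tauB_pow_succ σ q n i

lemma sameCycleB_zero_succ {j : Fin k} :
    (τB).SameCycle 0 j.succ ↔ σ.SameCycle q j := by
  constructor
  · intro h
    simpa using sameCycleB_proj σ q h
  · intro h
    exact (sameCycle_of_pow 1 (by rw [pow_one, tauB_zero])).trans
      (sameCycleB_succ_succ σ q h)

lemma sameCycleB_succ_zero {i : Fin k} :
    (τB).SameCycle i.succ 0 ↔ σ.SameCycle i q := by
  constructor
  · intro h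
    simpa using sameCycleB_proj σ q h
  · intro h
    exact ((sameCycleB_zero_succ σ q).2 h.symm).symm

lemma sameCycleB_succ_succ_iff {i j : Fin k} :
    (τB).SameCycle i.succ j.succ ↔ σ.SameCycle i j := by
  constructor
  · intro h
    simpa using sameCycleB_proj σ q h
  · exact sameCycleB_succ_succ σ q

end CaseB

namespace Frob
open Equiv Equiv.Perm

variable {A B : Type*} [CommRing A] [CommRing B] {k : ℕ}

lemma zero_mem_Reps (τ : Perm (Fin (k+1))) : 0 ∈ Reps τ :=
  mem_Reps.2 fun j _ => Fin.zero_le j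

section TransferA
variable (σ : Perm (Fin k))

local notation "τA" => (Equiv.Perm.decomposeFin.symm ((0 : Fin (k+1)), σ) : Perm (Fin (k+1)))

lemma Reps_tauA : Reps τA = insert 0 ((Reps σ).image Fin.succ) := by
  ext x
  rw [Finset.mem_insert]
  induction x using Fin.cases with
  | zero => simp [zero_mem_Reps]
  | succ i =>
    rw [Finset.mem_image]
    constructor
    · intro h
      right
      refine ⟨i, mem_Reps.2 fun j hj => ?_, rfl⟩
      exact Fin.succ_le_succ_iff.1 (mem_Reps.1 h j.succ ((sameCycleA_succ σ).2 hj))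
    · rintro (h0 | ⟨i', hi', hieq⟩)
      · exact absurd h0 (Fin.succ_ne_zero i)
      · have hii : i' = i := Fin.succ_injective _ hieq
        subst hii
        refine mem_Reps.2 fun j hj => ?_
        induction j using Fin.cases with
        | zero => exact absurd hj (not_sameCycleA_succ_zero σ _)
        | succ j' =>
          exact Fin.succ_le_succ_iff.2 (mem_Reps.1 hi' j' ((sameCycleA_succ σ).1 hj))

lemma Cyc_tauA_zero : Cyc τA 0 = {0} := by
  ext j
  rw [mem_Cyc, Finset.mem_singleton]
  exact ⟨fun h => sameCycleA_zero σ h, fun h => h ▸ Equiv.Perm.SameCycle.refl _ _⟩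

lemma Cyc_tauA_succ (i : Fin k) : Cyc τA i.succ = (Cyc σ i).image Fin.succ := by
  ext j
  rw [mem_Cyc, Finset.mem_image]
  induction j using Fin.cases with
  | zero =>
    constructor
    · intro h; exact absurd h (not_sameCycleA_succ_zero σ i)
    · rintro ⟨j', _, hj'⟩; exact absurd hj' (Fin.succ_ne_zero j')
  | succ j' =>
    constructor
    · intro h; exact ⟨j', mem_Cyc.2 ((sameCycleA_succ σ).1 h), rfl⟩
    · rintro ⟨j'', hj'', hje⟩
      have : j'' = j' := Fin.succ_injective _ hje
      subst this
      exact (sameCycleA_succ σ).2 (mem_Cyc.1 hj'')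

lemma frobTerm_tauA (f : A → B) (a : Fin (k+1) → A) :
    frobTerm f a τA = f (a 0) * frobTerm f (a ∘ Fin.succ) σ := by
  rw [frobTerm_eq, frobTerm_eq, Reps_tauA, Finset.prod_insert (by
    simp only [Finset.mem_image]
    rintro ⟨i, _, hi⟩
    exact Fin.succ_ne_zero i hi)]
  congr 1
  · rw [Cyc_tauA_zero, Finset.prod_singleton]
  · rw [Finset.prod_image (fun i _ j _ h => Fin.succ_injective _ h)]
    refine Finset.prod_congr rfl fun i _ => ?_
    rw [Cyc_tauA_succ, Finset.prod_image (fun i _ j _ h => Fin.succ_injective _ h)]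
    rfl

end TransferA

section TransferB
variable (σ : Perm (Fin k)) (q : Fin k)

local notation "τB'" => (Equiv.Perm.decomposeFin.symm (q.succ, σ) : Perm (Fin (k+1)))

lemma Reps_tauB :
    Reps τB' = insert 0 (((Reps σ).filter (fun i => ¬ σ.SameCycle i q)).image Fin.succ) := by
  ext x
  rw [Finset.mem_insert]
  induction x using Fin.cases with
  | zero => simp [zero_mem_Reps]
  | succ i =>
    rw [Finset.mem_image]
    constructor
    · intro h
      right
      refine ⟨i, Finset.mem_filter.2 ⟨mem_Reps.2 fun j hj => ?_, fun hc => ?_⟩, rfl⟩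
      · exact Fin.succ_le_succ_iff.1 (mem_Reps.1 h j.succ ((sameCycleB_succ_succ_iff σ q).2 hj))
      · have := mem_Reps.1 h 0 ((sameCycleB_succ_zero σ q).2 hc)
        exact absurd this (by simp [Fin.le_def, Fin.succ_ne_zero])
    · rintro (h0 | ⟨i', hi', hieq⟩)
      · exact absurd h0 (Fin.succ_ne_zero i)
      · have hii : i' = i := Fin.succ_injective _ hieq
        subst hii
        obtain ⟨hi', hnc⟩ := Finset.mem_filter.1 hi'
        refine mem_Reps.2 fun j hj => ?_
        induction j using Fin.cases with
        | zero => exact absurd ((sameCycleB_succ_zero σ q).1 hj) hnc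
        | succ j' =>
          exact Fin.succ_le_succ_iff.2
            (mem_Reps.1 hi' j' ((sameCycleB_succ_succ_iff σ q).1 hj))

lemma Cyc_tauB_zero : Cyc τB' 0 = insert 0 ((Cyc σ q).image Fin.succ) := by
  ext j
  rw [mem_Cyc, Finset.mem_insert, Finset.mem_image]
  induction j using Fin.cases with
  | zero =>
    simp only [true_or, iff_true]
    exact Equiv.Perm.SameCycle.refl _ _
  | succ j' =>
    constructor
    · intro h
      right
      exact ⟨j', mem_Cyc.2 ((sameCycleB_zero_succ σ q).1 h), rfl⟩
    · rintro (h0 | ⟨j'', hj'', hje⟩)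
      · exact absurd h0 (Fin.succ_ne_zero j')
      · have : j'' = j' := Fin.succ_injective _ hje
        subst this
        exact (sameCycleB_zero_succ σ q).2 (mem_Cyc.1 hj'')

lemma Cyc_tauB_succ (i : Fin k) (hnc : ¬ σ.SameCycle i q) :
    Cyc τB' i.succ = (Cyc σ i).image Fin.succ := by
  ext j
  rw [mem_Cyc, Finset.mem_image]
  induction j using Fin.cases with
  | zero =>
    constructor
    · intro h; exact absurd ((sameCycleB_succ_zero σ q).1 h) hnc
    · rintro ⟨j', _, hj'⟩; exact absurd hj' (Fin.succ_ne_zero j')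
  | succ j' =>
    constructor
    · intro h; exact ⟨j', mem_Cyc.2 ((sameCycleB_succ_succ_iff σ q).1 h), rfl⟩
    · rintro ⟨j'', hj'', hje⟩
      have : j'' = j' := Fin.succ_injective _ hje
      subst this
      exact (sameCycleB_succ_succ σ q) (mem_Cyc.1 hj'')

lemma erase_repOf_eq_filter :
    (Reps σ).erase (repOf σ q) = (Reps σ).filter (fun i => ¬ σ.SameCycle i q) := by
  ext i
  simp only [Finset.mem_erase, Finset.mem_filter]
  constructor
  · rintro ⟨hne, hi⟩
    exact ⟨hi, fun hc => hne (eq_repOf hi hc)⟩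
  · rintro ⟨hi, hnc⟩
    exact ⟨fun he => hnc (he ▸ sameCycle_repOf σ q), hi⟩

lemma frobTerm_tauB (f : A → B) (a : Fin (k+1) → A) :
    frobTerm f a τB' =
      frobTerm f (Function.update (a ∘ Fin.succ) q (a q.succ * a 0)) σ := by
  rw [frobTerm_update, frobTerm_eq, Reps_tauB, Finset.prod_insert (by
    simp only [Finset.mem_image]
    rintro ⟨i, _, hi⟩
    exact Fin.succ_ne_zero i hi)]
  rw [erase_repOf_eq_filter]
  congr 1
  · rw [Cyc_tauB_zero, Finset.prod_insert (by
      simp only [Finset.mem_image]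
      rintro ⟨i, _, hi⟩
      exact Fin.succ_ne_zero i hi)]
    rw [Finset.prod_image (fun i _ j _ h => Fin.succ_injective _ h)]
    rw [← Finset.mul_prod_erase _ _ (self_mem_Cyc (σ := σ) q)]
    show f (a 0 * ((a ∘ Fin.succ) q * ∏ j ∈ (Cyc σ q).erase q, (a ∘ Fin.succ) j)) = _
    congr 1
    simp only [Function.comp_apply]
    ring
  · rw [Finset.prod_image (fun i _ j _ h => Fin.succ_injective _ h)]
    refine Finset.prod_congr rfl fun i hi => ?_
    rw [Cyc_tauB_succ σ q i (Finset.mem_filter.1 hi).2,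
      Finset.prod_image (fun i _ j _ h => Fin.succ_injective _ h)]
    rfl

end TransferB

end Frob

namespace Frob
open Equiv Equiv.Perm

variable {A B : Type*} [CommRing A] [CommRing B] {k : ℕ}

theorem PhiPerm_succ (f : A → B) (a : Fin (k+1) → A) :
    PhiPerm f a = f (a 0) * PhiPerm f (a ∘ Fin.succ)
      - ∑ q : Fin k, PhiPerm f (Function.update (a ∘ Fin.succ) q (a q.succ * a 0)) := by
  unfold PhiPerm
  rw [← Equiv.sum_comp (Equiv.Perm.decomposeFin (n := k)).symm
      (fun τ => ((Equiv.Perm.sign τ : ℤˣ) : ℤ) • frobTerm f a τ), Fintype.sum_prod_type,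
      Fin.sum_univ_succ, sub_eq_add_neg]
  congr 1
  · rw [Finset.mul_sum]
    refine Finset.sum_congr rfl fun σ _ => ?_
    rw [Equiv.Perm.decomposeFin.symm_sign, if_pos rfl, one_mul, frobTerm_tauA]
    exact (mul_smul_comm _ _ _).symm
  · rw [← Finset.sum_neg_distrib]
    refine Finset.sum_congr rfl fun q _ => ?_
    rw [← Finset.sum_neg_distrib]
    refine Finset.sum_congr rfl fun σ _ => ?_
    rw [Equiv.Perm.decomposeFin.symm_sign, if_neg (Fin.succ_ne_zero q), frobTerm_tauB]
    rw [neg_one_mul, Units.val_neg, neg_smul]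

end Frob

namespace Frob
open Equiv Equiv.Perm

variable {A B : Type*} [CommRing A] [CommRing B] {k : ℕ}

lemma frobTerm_update_add' {inst : DecidableEq (Fin k)} (f : A → B)
    (hadd : ∀ x y, f (x + y) = f x + f y) (a : Fin k → A) (σ : Perm (Fin k)) (p : Fin k)
    (x y : A) :
    frobTerm f (@Function.update _ _ inst a p (x + y)) σ =
      frobTerm f (@Function.update _ _ inst a p x) σ +
        frobTerm f (@Function.update _ _ inst a p y) σ := by
  have : inst = instDecidableEqFin k := Subsingleton.elim _ _
  subst this
  rw [frobTerm_update, frobTerm_update, frobTerm_update, add_mul, hadd, add_mul]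

lemma frobTerm_update_smul' {R : Type*} [Monoid R] [DistribMulAction R A]
    [DistribMulAction R B] [IsScalarTower R A A] [IsScalarTower R B B]
    {inst : DecidableEq (Fin k)} (f : A → B)
    (hs : ∀ (c : R) x, f (c • x) = c • f x) (a : Fin k → A) (σ : Perm (Fin k)) (p : Fin k)
    (c : R) (x : A) :
    frobTerm f (@Function.update _ _ inst a p (c • x)) σ =
      c • frobTerm f (@Function.update _ _ inst a p x) σ := by
  have : inst = instDecidableEqFin k := Subsingleton.elim _ _
  subst this
  rw [frobTerm_update, frobTerm_update, smul_mul_assoc, hs, smul_mul_assoc]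

lemma PhiPerm_update_add' {inst : DecidableEq (Fin k)} (f : A → B)
    (hadd : ∀ x y, f (x + y) = f x + f y) (a : Fin k → A) (p : Fin k) (x y : A) :
    PhiPerm f (@Function.update _ _ inst a p (x + y)) =
      PhiPerm f (@Function.update _ _ inst a p x) +
        PhiPerm f (@Function.update _ _ inst a p y) := by
  unfold PhiPerm
  rw [← Finset.sum_add_distrib]
  refine Finset.sum_congr rfl fun σ _ => ?_
  rw [frobTerm_update_add' f hadd a σ p x y, smul_add]

lemma PhiPerm_update_smul' {R : Type*} [Monoid R] [DistribMulAction R A]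
    [DistribMulAction R B] [IsScalarTower R A A] [IsScalarTower R B B]
    [SMulCommClass ℤ R B]
    {inst : DecidableEq (Fin k)} (f : A → B)
    (hs : ∀ (c : R) x, f (c • x) = c • f x) (a : Fin k → A) (p : Fin k) (c : R) (x : A) :
    PhiPerm f (@Function.update _ _ inst a p (c • x)) =
      c • PhiPerm f (@Function.update _ _ inst a p x) := by
  unfold PhiPerm
  rw [Finset.smul_sum]
  refine Finset.sum_congr rfl fun σ _ => ?_
  rw [frobTerm_update_smul' f hs a σ p c x, smul_comm]

end Frob

namespace Frob
open Equiv Equiv.Perm Finset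

variable {X : Type*} [Fintype X] [DecidableEq X]

/-- point evaluation basis vector -/
noncomputable def delta (x : X) : X → ℂ := Pi.single x 1

/-- falling factorial `c(c-1)⋯(c-m+1)` -/
noncomputable def dp (c : ℂ) (m : ℕ) : ℂ := ∏ j ∈ Finset.range m, (c - j)

lemma dp_succ (c : ℂ) (m : ℕ) : dp c (m + 1) = dp c m * (c - m) := by
  rw [dp, dp, Finset.prod_range_succ]

/-- number of `i` with `y i = x` -/
def cnt {k : ℕ} (y : Fin k → X) (x : X) : ℕ := (Finset.univ.filter (fun i => y i = x)).card

lemma cnt_succ {k : ℕ} (y : Fin (k+1) → X) (x : X) :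
    cnt y x = (if y 0 = x then 1 else 0) + cnt (y ∘ Fin.succ) x := by
  unfold cnt
  rw [Finset.card_filter, Finset.card_filter, Fin.sum_univ_succ]
  rfl

lemma delta_mul_delta (x x' : X) :
    delta x * delta x' = if x = x' then delta x else 0 := by
  ext t
  rcases eq_or_ne x x' with h | h
  · subst h
    simp only [if_pos rfl, delta, Pi.mul_apply, Pi.single_apply]
    split_ifs with h <;> simp [Pi.single_apply, h]
  · rw [if_neg h]
    simp only [delta, Pi.mul_apply, Pi.single_apply, Pi.zero_apply]
    split_ifs with h1 h2 <;> simp_all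

lemma delta_sum_repr (g : X → ℂ) : g = ∑ x : X, g x • delta x := by
  funext t
  simp [delta, Pi.single_apply]

lemma PhiPerm_delta (f : (X → ℂ) →ₗ[ℂ] ℂ) :
    ∀ (k : ℕ) (y : Fin k → X),
      PhiPerm (⇑f) (fun i => delta (y i)) = ∏ x : X, dp (f (delta x)) (cnt y x) := by
  intro k
  induction k with
  | zero =>
    intro y
    haveI : Subsingleton (Perm (Fin 0)) := ⟨fun a b => Equiv.ext fun i => i.elim0⟩
    have h1 : PhiPerm (⇑f) (fun i : Fin 0 => delta (y i)) =
        ((Equiv.Perm.sign (1 : Perm (Fin 0)) : ℤˣ) : ℤ) •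
          frobTerm (⇑f) (fun i : Fin 0 => delta (y i)) 1 := by
      rw [PhiPerm]
      exact Fintype.sum_subsingleton _ 1
    rw [h1]
    have h2 : frobTerm (⇑f) (fun i : Fin 0 => delta (y i)) 1 = 1 := by
      rw [frobTerm]
      apply Finset.prod_eq_one
      intro i _
      exact absurd i.2 (by omega)
    rw [h2]
    have h3 : ∀ x : X, cnt y x = 0 := fun x => by
      simp [cnt, Finset.filter_eq_empty_iff]
    simp [h3, dp]
  | succ k ih =>
    intro y
    rw [PhiPerm_succ]
    have hcomp : (fun i : Fin (k+1) => delta (y i)) ∘ Fin.succ =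
        fun i : Fin k => delta ((y ∘ Fin.succ) i) := rfl
    have hterm : ∀ q : Fin k,
        PhiPerm (⇑f) (Function.update ((fun i : Fin (k+1) => delta (y i)) ∘ Fin.succ) q
          ((fun i : Fin (k+1) => delta (y i)) q.succ * (fun i : Fin (k+1) => delta (y i)) 0)) =
        if (y ∘ Fin.succ) q = y 0
          then ∏ x : X, dp (f (delta x)) (cnt (y ∘ Fin.succ) x) else 0 := by
      intro q
      show PhiPerm (⇑f) (Function.update ((fun i : Fin (k+1) => delta (y i)) ∘ Fin.succ) q
          (delta (y q.succ) * delta (y 0))) = _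
      rw [delta_mul_delta, hcomp]
      by_cases h : y q.succ = y 0
      · rw [if_pos h, if_pos (show (y ∘ Fin.succ) q = y 0 from h)]
        have hval : delta (y q.succ) =
            (fun i : Fin k => delta ((y ∘ Fin.succ) i)) q := rfl
        rw [hval, Function.update_eq_self]
        exact ih (y ∘ Fin.succ)
      · rw [if_neg h, if_neg (show ¬ (y ∘ Fin.succ) q = y 0 from h)]
        exact PhiPerm_eq_zero_of _ (map_zero f) _ q (by simp)
    rw [Finset.sum_congr rfl fun q _ => hterm q, hcomp]
    rw [show PhiPerm (⇑f) (fun i : Fin k => delta ((y ∘ Fin.succ) i)) =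
        ∏ x : X, dp (f (delta x)) (cnt (y ∘ Fin.succ) x) from ih (y ∘ Fin.succ)]
    rw [Finset.sum_ite, Finset.sum_const, Finset.sum_const_zero, add_zero, nsmul_eq_mul]
    have hcard : (Finset.univ.filter fun q : Fin k => (y ∘ Fin.succ) q = y 0).card =
        cnt (y ∘ Fin.succ) (y 0) := rfl
    rw [hcard]
    have hPsplit : ∏ x : X, dp (f (delta x)) (cnt (y ∘ Fin.succ) x) =
        dp (f (delta (y 0))) (cnt (y ∘ Fin.succ) (y 0)) *
          ∏ x ∈ Finset.univ.erase (y 0), dp (f (delta x)) (cnt (y ∘ Fin.succ) x) :=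
      (Finset.mul_prod_erase _ _ (Finset.mem_univ _)).symm
    have hcnt0 : cnt y (y 0) = cnt (y ∘ Fin.succ) (y 0) + 1 := by
      rw [cnt_succ, if_pos rfl]
      omega
    have hRHS : ∏ x : X, dp (f (delta x)) (cnt y x) =
        (dp (f (delta (y 0))) (cnt (y ∘ Fin.succ) (y 0)) *
            (f (delta (y 0)) - (cnt (y ∘ Fin.succ) (y 0) : ℕ))) *
          ∏ x ∈ Finset.univ.erase (y 0), dp (f (delta x)) (cnt (y ∘ Fin.succ) x) := by
      rw [← Finset.mul_prod_erase _ _ (Finset.mem_univ (y 0))]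
      congr 1
      · rw [hcnt0, dp_succ]
      · refine Finset.prod_congr rfl fun x hx => ?_
        rw [cnt_succ, if_neg (Finset.ne_of_mem_erase hx).symm, zero_add]
    rw [hRHS, hPsplit]
    show f (delta (y 0)) * _ - _ = _
    ring

end Frob

namespace Frob
open Equiv Equiv.Perm Finset

variable {X : Type*} [Fintype X] [DecidableEq X]

noncomputable def phiML (k : ℕ) (f : (X → ℂ) →ₗ[ℂ] ℂ) :
    MultilinearMap ℂ (fun _ : Fin k => (X → ℂ)) ℂ where
  toFun a := PhiPerm (⇑f) a
  map_update_add' := by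
    intro inst a p x y
    exact PhiPerm_update_add' (inst := inst) (⇑f) (fun u v => f.map_add u v) a p x y
  map_update_smul' := by
    intro inst a p c x
    exact PhiPerm_update_smul' (inst := inst) (⇑f) (fun c' u => f.map_smul c' u) a p c x

lemma PhiPerm_expand {k : ℕ} (f : (X → ℂ) →ₗ[ℂ] ℂ) (a : Fin k → (X → ℂ)) :
    PhiPerm (⇑f) a =
      ∑ y : Fin k → X, (∏ i, a i (y i)) • PhiPerm (⇑f) (fun i => delta (y i)) := by
  have h0 : PhiPerm (⇑f) a = phiML k f (fun i => ∑ x : X, a i x • delta x) := by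
    show PhiPerm (⇑f) a = PhiPerm (⇑f) _
    congr 1
    funext i
    exact delta_sum_repr (a i)
  rw [h0, MultilinearMap.map_sum]
  refine Finset.sum_congr rfl fun y _ => ?_
  rw [MultilinearMap.map_smul_univ]
  congr 1

end Frob

namespace Frob
open Equiv Equiv.Perm Finset

variable {X : Type*} [Fintype X] [DecidableEq X]

lemma f_apply (f : (X → ℂ) →ₗ[ℂ] ℂ) (g : X → ℂ) :
    f g = ∑ x : X, g x * f (delta x) := by
  conv_lhs => rw [delta_sum_repr g]
  rw [map_sum]
  simp [smul_eq_mul]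

lemma sum_cnt {k : ℕ} (y : Fin k → X) : ∑ x : X, cnt y x = k := by
  unfold cnt
  rw [← Finset.card_eq_sum_card_fiberwise (f := y) (fun a _ => Finset.mem_univ (y a))]
  simp

lemma cnt_const (x0 x : X) (k : ℕ) :
    cnt (fun _ : Fin k => x0) x = if x0 = x then k else 0 := by
  unfold cnt
  split_ifs with h
  · subst h; simp
  · rw [Finset.card_eq_zero, Finset.filter_eq_empty_iff]
    intro i _
    exact h

lemma forward (f : (X → ℂ) →ₗ[ℂ] ℂ) (n : ℕ) (h : IsFrobeniusHom (⇑f) n) :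
    ∃ x : Fin n → X, ∀ g : X → ℂ, f g = ∑ i, g (x i) := by
  obtain ⟨hphi, hone⟩ := h
  -- step 1: each f (delta x0) is a natural number ≤ n
  have step1 : ∀ x0 : X, ∃ j : ℕ, j < n + 1 ∧ f (delta x0) = j := by
    intro x0
    have h1 := hphi (fun _ => delta x0)
    have h2 : PhiPerm (⇑f) (fun _ : Fin (n+1) => delta x0) =
        ∏ x : X, dp (f (delta x)) (cnt (fun _ : Fin (n+1) => x0) x) :=
      PhiPerm_delta f (n+1) (fun _ => x0)
    rw [h1] at h2
    have h3 : ∏ x : X, dp (f (delta x)) (cnt (fun _ : Fin (n+1) => x0) x) =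
        dp (f (delta x0)) (n+1) := by
      rw [Finset.prod_eq_single x0]
      · rw [cnt_const, if_pos rfl]
      · intro x _ hx
        rw [cnt_const, if_neg (Ne.symm hx)]
        rfl
      · exact fun hx => absurd (Finset.mem_univ x0) hx
    rw [h3] at h2
    obtain ⟨j, hj, hj0⟩ := Finset.prod_eq_zero_iff.1 h2.symm
    exact ⟨j, Finset.mem_range.1 hj, sub_eq_zero.1 hj0⟩
  choose kk hkk1 hkk2 using step1
  -- step 3 : ∑ kk = n
  have step3 : ∑ x : X, kk x = n := by
    have h1 : f 1 = ∑ x : X, (kk x : ℂ) := by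
      rw [f_apply f 1]
      refine Finset.sum_congr rfl fun x _ => ?_
      rw [hkk2 x, Pi.one_apply, one_mul]
    rw [hone] at h1
    exact_mod_cast h1.symm
  -- step 4 : build the point tuple
  have hcard : Fintype.card (Σ x : X, Fin (kk x)) = Fintype.card (Fin n) := by
    simp [Fintype.card_sigma, step3]
  let e := Fintype.equivOfCardEq hcard
  refine ⟨fun i => (e.symm i).1, fun g => ?_⟩
  have h5 : ∑ i : Fin n, g ((e.symm i).1) = ∑ p : Σ x : X, Fin (kk x), g p.1 :=
    (Equiv.sum_comp e.symm (fun p => g p.1)).symm ▸ rfl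
  rw [h5, ← Finset.univ_sigma_univ, Finset.sum_sigma, f_apply f g]
  refine Finset.sum_congr rfl fun x _ => ?_
  rw [hkk2 x]
  simp [Finset.sum_const, mul_comm]

lemma backward (f : (X → ℂ) →ₗ[ℂ] ℂ) (n : ℕ) (xs : Fin n → X)
    (hf : ∀ g : X → ℂ, f g = ∑ i, g (xs i)) : IsFrobeniusHom (⇑f) n := by
  have hc : ∀ x : X, f (delta x) = (cnt xs x : ℂ) := by
    intro x
    rw [hf (delta x)]
    have : ∀ i : Fin n, delta x (xs i) = if xs i = x then (1 : ℂ) else 0 := by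
      intro i
      simp [delta, Pi.single_apply]
    rw [Finset.sum_congr rfl fun i _ => this i, Finset.sum_boole]
    rfl
  constructor
  · intro a
    rw [PhiPerm_expand f a]
    refine Finset.sum_eq_zero fun y _ => ?_
    have hzero : PhiPerm (⇑f) (fun i => delta (y i)) = 0 := by
      rw [PhiPerm_delta f (n+1) y]
      -- find a point where cnt y exceeds cnt xs
      have hex : ∃ x : X, cnt xs x < cnt y x := by
        by_contra hco
        push_neg at hco
        have := Finset.sum_le_sum (s := (Finset.univ : Finset X))
          (f := fun x => cnt y x) (g := fun x => cnt xs x) (fun x _ => hco x)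
        rw [sum_cnt, sum_cnt] at this
        omega
      obtain ⟨x, hx⟩ := hex
      refine Finset.prod_eq_zero (Finset.mem_univ x) ?_
      rw [hc x, dp]
      refine Finset.prod_eq_zero (Finset.mem_range.2 hx) ?_
      simp
    rw [hzero, smul_zero]
  · rw [hf 1]
    simp

end Frob

lemma Frob.multiset_count {X : Type*} [DecidableEq X] (m : Multiset X) (x : X) :
    (m.map (fun a => if a = x then (1 : ℂ) else 0)).sum = m.count x := by
  induction m using Multiset.induction_on with
  | empty => simp
  | cons a s ih =>
    rw [Multiset.map_cons, Multiset.sum_cons, ih, Multiset.count_cons]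
    by_cases h : a = x
    · rw [if_pos h, if_pos h.symm]; push_cast; ring
    · rw [if_neg h, if_neg (fun hh => h hh.symm)]; push_cast; ring


/-- Theorem 3.1: for a finite set `X`, a linear map `f : C(X) → ℂ` is a Frobenius
`n`-homomorphism iff it is a sum of `n` point evaluations; moreover distinct
points (multisets) give distinct functionals, so the evaluation map
`Sym^n(X) → Hom(C(X),ℂ)` is a bijection onto the set of Frobenius
`n`-homomorphisms. -/
theorem frobeniusHom_iff_sum_evals {X : Type*} [Fintype X] (n : ℕ) :
    (∀ f : (X → ℂ) →ₗ[ℂ] ℂ,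
      IsFrobeniusHom (f : (X → ℂ) → ℂ) n ↔
        ∃ x : Fin n → X, ∀ g : X → ℂ, f g = ∑ i, g (x i)) ∧
    (∀ m₁ m₂ : Multiset X, Multiset.card m₁ = n → Multiset.card m₂ = n →
      (∀ g : X → ℂ, (m₁.map g).sum = (m₂.map g).sum) → m₁ = m₂) := by

  classical
  constructor
  · intro f
    constructor
    · exact Frob.forward f n
    · rintro ⟨x, hx⟩
      exact Frob.backward f n x hx
  · intro m₁ m₂ _ _ hsum
    have hcount : ∀ x : X, m₁.count x = m₂.count x := by
      intro x
      have h := hsum (fun a => if a = x then (1 : ℂ) else 0)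
      rw [Frob.multiset_count, Frob.multiset_count] at h
      exact_mod_cast h
    exact Multiset.ext.2 hcount
end
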